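/- arXiv:1110.5657 — 5 statements merged into one kernel-verified Lean document; each statement's English description precedes it below -/
import Mathlib

section
/- If f : [0,1] → ℂ is a parameterization of an arc A (a continuous bijection from [0,1] onto A), then f(0) and f(1) are precisely the non-cut points of A. -/
/-- `p` is a cut point of `X`: `p ∈ X` and `X \ {p}` is disconnected. -/
def IsCutPoint (X : Set ℂ) (p : ℂ) : Prop :=
  p ∈ X ∧ ¬ IsPreconnected (X \ {p})

open Set

lemma arc_image_diff_singleton {f : ℝ → ℂ} {s : Set ℝ} (hinj : Set.InjOn f s)
    {t : ℝ} (ht : t ∈ s) : f '' s \ {f t} = f '' (s \ {t}) := by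
  ext y
  constructor
  · rintro ⟨⟨x, hx, rfl⟩, hy⟩
    exact ⟨x, ⟨hx, fun h => hy (by simp only [mem_singleton_iff] at h ⊢; rw [h])⟩, rfl⟩
  · rintro ⟨x, ⟨hx, hxt⟩, rfl⟩
    exact ⟨⟨x, hx, rfl⟩, fun h => hxt (hinj hx ht (by simpa using h))⟩

theorem noncut_points_of_arc (A : Set ℂ) (f : ℝ → ℂ)
    (hcont : ContinuousOn f (Set.Icc 0 1)) (hinj : Set.InjOn f (Set.Icc 0 1))
    (himg : f '' Set.Icc 0 1 = A) :
    {x ∈ A | ¬ IsCutPoint A x} = {f 0, f 1} := by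
  subst himg
  have h0 : (0:ℝ) ∈ Icc (0:ℝ) 1 := by norm_num
  have h1 : (1:ℝ) ∈ Icc (0:ℝ) 1 := by norm_num
  ext x
  simp only [Set.mem_setOf_eq, Set.mem_insert_iff, Set.mem_singleton_iff]
  constructor
  · rintro ⟨hxA, hnc⟩
    by_contra hne
    push_neg at hne
    obtain ⟨hne0, hne1⟩ := hne
    obtain ⟨t, ht, rfl⟩ := hxA
    have ht0 : 0 < t := lt_of_le_of_ne ht.1 (fun h => hne0 (by rw [← h]))
    have ht1 : t < 1 := lt_of_le_of_ne ht.2 (fun h => hne1 (by rw [h]))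
    apply hnc
    refine ⟨⟨t, ht, rfl⟩, ?_⟩
    intro hpre
    set S := f '' Icc (0:ℝ) 1 \ {f t} with hS
    have hK1 : IsClosed (f '' Icc (0:ℝ) t) :=
      (isCompact_Icc.image_of_continuousOn
        (hcont.mono (Icc_subset_Icc le_rfl ht.2))).isClosed
    have hK2 : IsClosed (f '' Icc t 1) :=
      (isCompact_Icc.image_of_continuousOn
        (hcont.mono (Icc_subset_Icc ht.1 le_rfl))).isClosed
    -- helper: f s ∉ f '' Icc a b when s ∈ Icc 0 1 and s ∉ Icc a b ⊆ Icc 0 1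
    have key : ∀ s ∈ Icc (0:ℝ) 1, ∀ a b : ℝ, Icc a b ⊆ Icc (0:ℝ) 1 →
        s ∉ Icc a b → f s ∉ f '' Icc a b := by
      rintro s hs a b hab hsab ⟨u, hu, huv⟩
      exact hsab (hinj (hab hu) hs huv ▸ hu)
    have hsub : S ⊆ (f '' Icc t 1)ᶜ ∪ (f '' Icc (0:ℝ) t)ᶜ := by
      rintro y ⟨⟨s, hs, rfl⟩, hy⟩
      have hst : s ≠ t := fun h => hy (by simp [h])
      rcases lt_or_gt_of_ne hst with h | h
      · exact Or.inl (key s hs t 1 (Icc_subset_Icc ht.1 le_rfl)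
          (fun hmem => absurd hmem.1 (not_le.mpr h)))
      · exact Or.inr (key s hs 0 t (Icc_subset_Icc le_rfl ht.2)
          (fun hmem => absurd hmem.2 (not_le.mpr h)))
    have hmem0 : f 0 ∈ S ∩ (f '' Icc t 1)ᶜ := by
      refine ⟨⟨⟨0, h0, rfl⟩, fun h => ?_⟩, key 0 h0 t 1 (Icc_subset_Icc ht.1 le_rfl)
        (fun hmem => absurd hmem.1 (not_le.mpr ht0))⟩
      exact absurd (hinj h0 ht (by simpa using h)) (by simp [ht0.ne])
    have hmem1 : f 1 ∈ S ∩ (f '' Icc (0:ℝ) t)ᶜ := by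
      refine ⟨⟨⟨1, h1, rfl⟩, fun h => ?_⟩, key 1 h1 0 t (Icc_subset_Icc le_rfl ht.2)
        (fun hmem => absurd hmem.2 (not_le.mpr ht1))⟩
      exact absurd (hinj h1 ht (by simpa using h)) (by simp [ht1.ne'])
    obtain ⟨y, ⟨⟨s, hs, rfl⟩, -⟩, hyu, hyv⟩ :=
      hpre _ _ hK2.isOpen_compl hK1.isOpen_compl hsub ⟨f 0, hmem0⟩ ⟨f 1, hmem1⟩
    have h2 : t < s := not_le.mp fun h => hyv ⟨s, ⟨hs.1, h⟩, rfl⟩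
    exact hyu ⟨s, ⟨h2.le, hs.2⟩, rfl⟩
  · rintro (rfl | rfl)
    · refine ⟨⟨0, h0, rfl⟩, ?_⟩
      rintro ⟨-, h⟩
      apply h
      rw [arc_image_diff_singleton hinj h0, Icc_diff_left]
      exact isPreconnected_Ioc.image f (hcont.mono Ioc_subset_Icc_self)
    · refine ⟨⟨1, h1, rfl⟩, ?_⟩
      rintro ⟨-, h⟩
      apply h
      rw [arc_image_diff_singleton hinj h1, Icc_sdiff_right]
      exact isPreconnected_Ico.image f (hcont.mono Ico_subset_Icc_self)
end

section
/- If U ⊆ ℂ is a nonempty open connected set and p, q are distinct points of U, then there is a polygonal arc from p to q contained in U whose intermediate vertexes all have rational real and imaginary parts. Moreover, for every ε > 0, such a polygonal arc can be chosen so that each of its line segments has length less than ε. -/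
/-- `A` is an arc from `p` to `q`. -/
def ArcFrom (p q : ℂ) (A : Set ℂ) : Prop :=
  ∃ f : ℝ → ℂ, ContinuousOn f (Set.Icc 0 1) ∧ Set.InjOn f (Set.Icc 0 1) ∧
    f '' Set.Icc 0 1 = A ∧ f 0 = p ∧ f 1 = q

/-- A complex number is rational if both its real and imaginary parts are. -/
def IsRationalPoint (z : ℂ) : Prop :=
  (∃ a : ℚ, (a : ℝ) = z.re) ∧ ∃ b : ℚ, (b : ℝ) = z.im


open Complex Set

/-- lattice point wrt spacing δ and offsets c₁ c₂ -/
def GLat (δ c₁ c₂ : ℝ) (z : ℂ) : Prop :=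
  (∃ k : ℤ, z.re = c₁ + k * δ) ∧ (∃ k : ℤ, z.im = c₂ + k * δ)

/-- adjacency: difference is a unit grid step -/
def Adj (δ : ℝ) (z w : ℂ) : Prop :=
  w - z = (δ:ℂ) ∨ w - z = -(δ:ℂ) ∨ w - z = (δ:ℂ)*Complex.I ∨ w - z = -((δ:ℂ)*Complex.I)

lemma Adj.symm {δ : ℝ} {z w : ℂ} (h : Adj δ z w) : Adj δ w z := by
  unfold Adj at *
  rcases h with h|h|h|h
  · right; left; rw [← h]; ring
  · left; rw [show z - w = -(w - z) by ring, h]; ring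
  · right;right;right; rw [← h]; ring
  · right;right;left; rw [show z - w = -(w - z) by ring, h]; ring

lemma Adj.dist {δ : ℝ} (hδ : 0 < δ) {z w : ℂ} (h : Adj δ z w) : dist z w = δ := by
  rw [dist_comm, Complex.dist_eq]
  rcases h with h|h|h|h <;> rw [h] <;>
    simp [norm_neg, abs_of_pos hδ]

lemma Adj.lat {δ c₁ c₂ : ℝ} {z w : ℂ} (hz : GLat δ c₁ c₂ z) (h : Adj δ z w) :
    GLat δ c₁ c₂ w := by
  obtain ⟨⟨k₁, h₁⟩, ⟨k₂, h₂⟩⟩ := hz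
  have hw : w = z + (w - z) := by ring
  rcases h with h|h|h|h <;> rw [h] at hw <;> rw [hw] <;>
    refine ⟨?_, ?_⟩ <;>
    simp only [Complex.add_re, Complex.add_im, h₁, h₂, Complex.ofReal_re,
      Complex.ofReal_im, Complex.neg_re, Complex.neg_im, Complex.mul_re,
      Complex.mul_im, Complex.I_re, Complex.I_im]
  · exact ⟨k₁ + 1, by push_cast; ring⟩
  · exact ⟨k₂, by push_cast; ring⟩
  · exact ⟨k₁ - 1, by push_cast; ring⟩
  · exact ⟨k₂, by push_cast; ring⟩
  · exact ⟨k₁, by push_cast; ring⟩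
  · exact ⟨k₂ + 1, by push_cast; ring⟩
  · exact ⟨k₁, by push_cast; ring⟩
  · exact ⟨k₂ - 1, by push_cast; ring⟩

/-- 1-D lemma: two unit lattice intervals -/
lemma oneD_a {δ : ℝ} (hδ : 0 < δ) {m k : ℤ} {s t : ℝ}
    (hs : s ∈ Icc (0:ℝ) 1) (ht : t ∈ Icc (0:ℝ) 1)
    (h : (m:ℝ) * δ + s * δ = k * δ + t * δ) :
    (m = k ∧ s = t) ∨ (m = k + 1 ∧ s = 0 ∧ t = 1) ∨ (k = m + 1 ∧ s = 1 ∧ t = 0) := by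
  have h' : (m:ℝ) + s = k + t := by
    have h2 : ((m:ℝ) + s) * δ = ((k:ℝ) + t) * δ := by ring_nf; ring_nf at h; linarith
    exact mul_right_cancel₀ (ne_of_gt hδ) h2
  have hmk : ((m - k : ℤ) : ℝ) = t - s := by push_cast; linarith
  have h1 : (m - k : ℤ) ≤ 1 := by
    have : ((m-k:ℤ):ℝ) ≤ 1 := by rw [hmk]; linarith [hs.1, ht.2]
    exact_mod_cast this
  have h2 : (-1 : ℤ) ≤ m - k := by
    have : (-1:ℝ) ≤ ((m-k:ℤ):ℝ) := by rw [hmk]; linarith [hs.2, ht.1]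
    exact_mod_cast this
  rcases show m - k = -1 ∨ m - k = 0 ∨ m - k = 1 by omega with h3|h3|h3
  · right; right
    have hts : t - s = -1 := by rw [← hmk, h3]; norm_num
    exact ⟨by omega, by linarith [ht.1, hs.2], by linarith [ht.1, hs.2]⟩
  · left
    have hts : t - s = 0 := by rw [← hmk, h3]; norm_num
    exact ⟨by omega, by linarith⟩
  · right; left
    have hts : t - s = 1 := by rw [← hmk, h3]; norm_num
    exact ⟨by omega, by linarith [hs.1, ht.2], by linarith [hs.1, ht.2]⟩

lemma oneD_b {δ : ℝ} (hδ : 0 < δ) {m k : ℤ} {s : ℝ} (hs : s ∈ Icc (0:ℝ) 1)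
    (h : (m:ℝ) * δ + s * δ = k * δ) :
    (k = m ∧ s = 0) ∨ (k = m + 1 ∧ s = 1) := by
  have h0 : (m:ℝ) * δ + s * δ = k * δ + 0 * δ := by rw [h]; ring
  rcases oneD_a hδ hs (Set.mem_Icc.2 ⟨le_refl 0, zero_le_one⟩) h0 with
    ⟨h1, h2⟩ | ⟨h1, h2, h3⟩ | ⟨h1, h2, h3⟩
  · exact Or.inl ⟨h1.symm, h2⟩
  · exact absurd h3 (by norm_num)
  · exact Or.inr ⟨h1, h2⟩

lemma seg_param {z w x : ℂ} (h : x ∈ segment ℝ z w) :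
    ∃ s ∈ Icc (0:ℝ) 1, x = z + s • (w - z) := by
  rw [segment_eq_image'] at h
  obtain ⟨s, hs, hx⟩ := h
  exact ⟨s, hs, hx.symm⟩

lemma adj_norm {δ c₁ c₂ : ℝ} {z w : ℂ} (hz : GLat δ c₁ c₂ z) (h : Adj δ z w) :
    ∃ z' w' : ℂ, ((z' = z ∧ w' = w) ∨ (z' = w ∧ w' = z)) ∧ GLat δ c₁ c₂ z' ∧
      segment ℝ z' w' = segment ℝ z w ∧
      (w' - z' = (δ:ℂ) ∨ w' - z' = (δ:ℂ)*Complex.I) := by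
  rcases h with h|h|h|h
  · exact ⟨z, w, Or.inl ⟨rfl, rfl⟩, hz, rfl, Or.inl h⟩
  · refine ⟨w, z, Or.inr ⟨rfl, rfl⟩, ?_, segment_symm ℝ w z, Or.inl ?_⟩
    · exact Adj.lat hz (Or.inr (Or.inl h))
    · rw [show z - w = -(w - z) by ring, h]; ring
  · exact ⟨z, w, Or.inl ⟨rfl, rfl⟩, hz, rfl, Or.inr h⟩
  · refine ⟨w, z, Or.inr ⟨rfl, rfl⟩, ?_, segment_symm ℝ w z, Or.inr ?_⟩
    · exact Adj.lat hz (Or.inr (Or.inr (Or.inr h)))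
    · rw [show z - w = -(w - z) by ring, h]; ring

lemma grid_core {δ c₁ c₂ : ℝ} (hδ : 0 < δ) {z a : ℂ}
    (hz : GLat δ c₁ c₂ z) (ha : GLat δ c₁ c₂ a)
    {d e : ℂ} (hd : d = (δ:ℂ) ∨ d = (δ:ℂ)*Complex.I)
    (he : e = (δ:ℂ) ∨ e = (δ:ℂ)*Complex.I)
    {s t : ℝ} (hs : s ∈ Icc (0:ℝ) 1) (ht : t ∈ Icc (0:ℝ) 1)
    (heq : z + s • d = a + t • e) :
    (z = a ∧ d = e) ∨ ((s = 0 ∨ s = 1) ∧ (t = 0 ∨ t = 1)) := by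
  obtain ⟨⟨m₁, hm₁⟩, ⟨m₂, hm₂⟩⟩ := hz
  obtain ⟨⟨k₁, hk₁⟩, ⟨k₂, hk₂⟩⟩ := ha
  rcases hd with hd|hd <;> rcases he with he|he <;> subst hd he <;>
    rw [Complex.ext_iff] at heq <;>
    simp only [Complex.add_re, Complex.add_im, Complex.real_smul, Complex.mul_re,
      Complex.mul_im, Complex.ofReal_re, Complex.ofReal_im, Complex.I_re, Complex.I_im,
      mul_one] at heq <;>
    obtain ⟨h1, h2⟩ := heq
  · -- d = δ, e = δ : same row
    have hre : (m₁:ℝ) * δ + s * δ = k₁ * δ + t * δ := by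
      rw [hm₁, hk₁] at h1; ring_nf; ring_nf at h1; linarith
    have him : z.im = a.im := by ring_nf at h2; linarith
    rcases oneD_a hδ hs ht hre with ⟨hmk, hst⟩|⟨_,h0,h1'⟩|⟨_,h0,h1'⟩
    · left
      refine ⟨Complex.ext ?_ him, rfl⟩
      rw [hm₁, hk₁, hmk]
    · exact Or.inr ⟨Or.inl h0, Or.inr h1'⟩
    · exact Or.inr ⟨Or.inr h0, Or.inl h1'⟩
  · -- d = δ, e = δI
    right
    constructor
    · have hre : (m₁:ℝ) * δ + s * δ = k₁ * δ := by
        rw [hm₁, hk₁] at h1; ring_nf; ring_nf at h1; linarith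
      rcases oneD_b hδ hs hre with ⟨_,h0⟩|⟨_,h0⟩
      exacts [Or.inl h0, Or.inr h0]
    · have him : (k₂:ℝ) * δ + t * δ = m₂ * δ := by
        rw [hm₂, hk₂] at h2; ring_nf; ring_nf at h2; linarith
      rcases oneD_b hδ ht him with ⟨_,h0⟩|⟨_,h0⟩
      exacts [Or.inl h0, Or.inr h0]
  · -- d = δI, e = δ
    right
    constructor
    · have him : (m₂:ℝ) * δ + s * δ = k₂ * δ := by
        rw [hm₂, hk₂] at h2; ring_nf; ring_nf at h2; linarith
      rcases oneD_b hδ hs him with ⟨_,h0⟩|⟨_,h0⟩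
      exacts [Or.inl h0, Or.inr h0]
    · have hre : (k₁:ℝ) * δ + t * δ = m₁ * δ := by
        rw [hm₁, hk₁] at h1; ring_nf; ring_nf at h1; linarith
      rcases oneD_b hδ ht hre with ⟨_,h0⟩|⟨_,h0⟩
      exacts [Or.inl h0, Or.inr h0]
  · -- d = δI, e = δI : same column
    have him : (m₂:ℝ) * δ + s * δ = k₂ * δ + t * δ := by
      rw [hm₂, hk₂] at h2; ring_nf; ring_nf at h2; linarith
    have hre : z.re = a.re := by ring_nf at h1; linarith
    rcases oneD_a hδ hs ht him with ⟨hmk, hst⟩|⟨_,h0,h1'⟩|⟨_,h0,h1'⟩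
    · left
      refine ⟨Complex.ext hre ?_, rfl⟩
      rw [hm₂, hk₂, hmk]
    · exact Or.inr ⟨Or.inl h0, Or.inr h1'⟩
    · exact Or.inr ⟨Or.inr h0, Or.inl h1'⟩

/-- two grid edges intersect only at common endpoints, unless they coincide -/
lemma grid_inter {δ c₁ c₂ : ℝ} (hδ : 0 < δ) {z w a b x : ℂ}
    (hz : GLat δ c₁ c₂ z) (ha : GLat δ c₁ c₂ a) (hzw : Adj δ z w) (hab : Adj δ a b)
    (hx1 : x ∈ segment ℝ z w) (hx2 : x ∈ segment ℝ a b) :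
    ((x = z ∨ x = w) ∧ (x = a ∨ x = b)) ∨ ((z = a ∧ w = b) ∨ (z = b ∧ w = a)) := by
  obtain ⟨z', w', hzw', hz', hseg1, hd⟩ := adj_norm hz hzw
  obtain ⟨a', b', hab', ha', hseg2, he⟩ := adj_norm ha hab
  rw [← hseg1] at hx1
  rw [← hseg2] at hx2
  obtain ⟨s, hs, hxs⟩ := seg_param hx1
  obtain ⟨t, ht, hxt⟩ := seg_param hx2
  have heq : z' + s • (w' - z') = a' + t • (b' - a') := by rw [← hxs, ← hxt]
  rcases grid_core hδ hz' ha' hd he hs ht heq with ⟨h1, h2⟩ | ⟨hs', ht'⟩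
  · right
    have hw' : w' = b' := by
      have h3 : w' - z' = b' - a' := h2
      rw [h1] at h3
      exact by linear_combination h3
    rcases hzw' with ⟨rfl,rfl⟩|⟨rfl,rfl⟩ <;> rcases hab' with ⟨rfl,rfl⟩|⟨rfl,rfl⟩
    exacts [Or.inl ⟨h1,hw'⟩, Or.inr ⟨h1,hw'⟩, Or.inr ⟨hw',h1⟩, Or.inl ⟨hw',h1⟩]
  · left
    have hx1' : x = z' ∨ x = w' := by
      rcases hs' with h|h
      · left; rw [hxs, h]; simp
      · right; rw [hxs, h]; simp
    have hx2' : x = a' ∨ x = b' := by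
      rcases ht' with h|h
      · left; rw [hxt, h]; simp
      · right; rw [hxt, h]; simp
    constructor
    · rcases hzw' with ⟨e1,e2⟩|⟨e1,e2⟩
      · rwa [e1, e2] at hx1'
      · rw [e1, e2] at hx1'; exact hx1'.symm
    · rcases hab' with ⟨f1,f2⟩|⟨f1,f2⟩
      · rwa [f1, f2] at hx2'
      · rw [f1, f2] at hx2'; exact hx2'.symm

/-- a lattice point on a grid edge is one of its endpoints -/
lemma lat_on_edge {δ c₁ c₂ : ℝ} (hδ : 0 < δ) {z w x : ℂ}
    (hz : GLat δ c₁ c₂ z) (hx : GLat δ c₁ c₂ x) (hzw : Adj δ z w)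
    (hmem : x ∈ segment ℝ z w) : x = z ∨ x = w := by
  obtain ⟨z', w', hzw', hz', hseg, hd⟩ := adj_norm hz hzw
  rw [← hseg] at hmem
  obtain ⟨s, hs, hxs⟩ := seg_param hmem
  obtain ⟨⟨m₁, hm₁⟩, ⟨m₂, hm₂⟩⟩ := hz'
  obtain ⟨⟨k₁, hk₁⟩, ⟨k₂, hk₂⟩⟩ := hx
  have hx' : x = z' ∨ x = w' := by
    rcases hd with hd|hd <;> rw [hd] at hxs
    · have h1 : x.re = z'.re + s * δ := by
        rw [hxs]; simp [Complex.real_smul]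
      have : (m₁:ℝ) * δ + s * δ = k₁ * δ := by
        rw [hm₁] at h1; rw [hk₁] at h1; linarith
      rcases oneD_b hδ hs this with ⟨_,h0⟩|⟨_,h0⟩
      · left; rw [hxs, h0]; simp
      · right
        have : w' = z' + (δ:ℂ) := by rw [← hd]; ring
        rw [hxs, h0, this]; simp
    · have h1 : x.im = z'.im + s * δ := by
        rw [hxs]; simp [Complex.real_smul]
      have : (m₂:ℝ) * δ + s * δ = k₂ * δ := by
        rw [hm₂] at h1; rw [hk₂] at h1; linarith
      rcases oneD_b hδ hs this with ⟨_,h0⟩|⟨_,h0⟩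
      · left; rw [hxs, h0]; simp
      · right
        have : w' = z' + (δ:ℂ)*Complex.I := by rw [← hd]; ring
        rw [hxs, h0, this]; simp
  rcases hzw' with ⟨e1,e2⟩|⟨e1,e2⟩
  · rwa [e1, e2] at hx'
  · rw [e1, e2] at hx'; exact hx'.symm

/-- every point of a grid edge lies on a grid line -/
lemma edge_on_gridline {δ c₁ c₂ : ℝ} {z w x : ℂ}
    (hz : GLat δ c₁ c₂ z) (hzw : Adj δ z w) (hmem : x ∈ segment ℝ z w) :
    (∃ k : ℤ, x.re = c₁ + k * δ) ∨ (∃ k : ℤ, x.im = c₂ + k * δ) := by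
  obtain ⟨z', w', hzw', hz', hseg, hd⟩ := adj_norm hz hzw
  rw [← hseg] at hmem
  obtain ⟨s, hs, hxs⟩ := seg_param hmem
  obtain ⟨⟨m₁, hm₁⟩, ⟨m₂, hm₂⟩⟩ := hz'
  rcases hd with hd|hd <;> rw [hd] at hxs
  · right
    refine ⟨m₂, ?_⟩
    rw [hxs]; simp [Complex.real_smul, hm₂]
  · left
    refine ⟨m₁, ?_⟩
    rw [hxs]; simp [Complex.real_smul, hm₁]

/-- signed integer clamp -/
def icl (j Δ : ℤ) : ℤ := Δ.sign * min (max j 0) |Δ|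

lemma icl_nonpos {j Δ : ℤ} (h : j ≤ 0) : icl j Δ = 0 := by
  unfold icl
  have : max j 0 = 0 := by omega
  rw [this]
  have : min 0 |Δ| = 0 := by have := abs_nonneg Δ; omega
  rw [this, mul_zero]

lemma icl_full {j Δ : ℤ} (h : |Δ| ≤ j) : icl j Δ = Δ := by
  unfold icl
  have h0 : (0:ℤ) ≤ |Δ| := abs_nonneg Δ
  have : max j 0 = j := by omega
  rw [this]
  have : min j |Δ| = |Δ| := by omega
  rw [this, Int.sign_mul_abs]

lemma icl_abs_le (j Δ : ℤ) : |icl j Δ| ≤ |Δ| := by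
  unfold icl
  rw [abs_mul]
  rcases Int.lt_trichotomy Δ 0 with h|h|h
  · rw [Int.sign_eq_neg_one_of_neg h]
    have := abs_nonneg Δ
    simp only [abs_neg, abs_one, one_mul, abs_le]
    constructor <;> [skip; skip] <;>
      · rcases le_or_gt j 0 with h'|h' <;> rcases le_or_gt j |Δ| with h''|h'' <;>
          simp [abs_le] <;> omega
  · subst h; simp
  · rw [Int.sign_eq_one_of_pos h]
    have := abs_nonneg Δ
    rcases le_or_gt j 0 with h'|h' <;> rcases le_or_gt j |Δ| with h''|h'' <;>
      simp [abs_le] <;> omega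

lemma icl_step (j Δ : ℤ) :
    icl (j+1) Δ = icl j Δ ∨
    (0 ≤ j ∧ j < |Δ| ∧ Δ ≠ 0 ∧ icl (j+1) Δ = icl j Δ + Δ.sign) := by
  rcases le_or_gt |Δ| j with h|h
  · left; rw [icl_full h, icl_full (by omega)]
  rcases lt_or_ge j 0 with h'|h'
  · left; rw [icl_nonpos (by omega), icl_nonpos (by omega)]
  · right
    have hΔ : Δ ≠ 0 := by
      intro h0; rw [h0] at h; simp at h; omega
    refine ⟨h', h, hΔ, ?_⟩
    unfold icl
    have e1 : max (j+1) 0 = j + 1 := by omega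
    have e2 : max j 0 = j := by omega
    have e3 : min (j+1) |Δ| = j+1 := by omega
    have e4 : min j |Δ| = j := by omega
    rw [e1, e2, e3, e4]; ring

/-- staircase point -/
noncomputable def stair (δ : ℝ) (A : ℂ) (dx dy : ℤ) (k : ℤ) : ℂ :=
  A + ((icl k dx : ℤ) * δ : ℝ) + (((icl (k - |dx|) dy : ℤ) * δ : ℝ)) * Complex.I

lemma stair_nonpos (δ : ℝ) (A : ℂ) (dx dy : ℤ) {k : ℤ} (h : k ≤ 0) :
    stair δ A dx dy k = A := by
  unfold stair
  rw [icl_nonpos h, icl_nonpos (by have := abs_nonneg dx; omega)]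
  push_cast; ring

lemma stair_full (δ : ℝ) (A : ℂ) (dx dy : ℤ) {k : ℤ} (h : |dx| + |dy| ≤ k) :
    stair δ A dx dy k = A + ((dx:ℝ) * δ : ℝ) + (((dy:ℝ) * δ : ℝ)) * Complex.I := by
  unfold stair
  rw [icl_full (by have := abs_nonneg dy; omega), icl_full (by omega)]

lemma stair_lat {δ c₁ c₂ : ℝ} {A : ℂ} (hA : GLat δ c₁ c₂ A) (dx dy : ℤ) (k : ℤ) :
    GLat δ c₁ c₂ (stair δ A dx dy k) := by
  obtain ⟨⟨m₁, hm₁⟩, ⟨m₂, hm₂⟩⟩ := hA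
  unfold stair
  constructor
  · refine ⟨m₁ + icl k dx, ?_⟩
    simp only [Complex.add_re, Complex.mul_re, Complex.ofReal_re, Complex.ofReal_im,
      Complex.I_re, Complex.I_im, mul_zero, mul_one, zero_mul]
    rw [hm₁]; push_cast; ring
  · refine ⟨m₂ + icl (k - |dx|) dy, ?_⟩
    simp only [Complex.add_im, Complex.mul_im, Complex.ofReal_re, Complex.ofReal_im,
      Complex.I_re, Complex.I_im, mul_zero, mul_one, zero_mul]
    rw [hm₂]; push_cast; ring

lemma stair_step (δ : ℝ) (hδ : 0 < δ) (A : ℂ) (dx dy : ℤ) (k : ℤ) (hk : 0 ≤ k) :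
    stair δ A dx dy k = stair δ A dx dy (k+1) ∨
      Adj δ (stair δ A dx dy k) (stair δ A dx dy (k+1)) := by
  have key : ∀ u v : ℤ, stair δ A dx dy (k+1) - stair δ A dx dy k =
      ((icl (k+1) dx - icl k dx : ℤ) * δ : ℝ) +
      (((icl (k+1-|dx|) dy - icl (k-|dx|) dy : ℤ) * δ : ℝ)) * Complex.I := by
    intro _ _
    unfold stair
    push_cast
    ring_nf
  have key := key 0 0
  rcases icl_step k dx with h1|⟨hk0, hklt, hne, h1⟩
  · rcases icl_step (k - |dx|) dy with h2|⟨hk0', hklt', hne', h2⟩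
    · left
      have : stair δ A dx dy (k+1) - stair δ A dx dy k = 0 := by
        rw [key, show k + 1 - |dx| = k - |dx| + 1 by ring, h1, h2]
        push_cast; ring
      linear_combination -this
    · -- vertical step
      right
      have hd : stair δ A dx dy (k+1) - stair δ A dx dy k = ((dy.sign : ℝ) * δ) * Complex.I := by
        rw [key, show k + 1 - |dx| = k - |dx| + 1 by ring, h1, h2]
        push_cast; ring
      rcases Int.lt_trichotomy dy 0 with hs|hs|hs
      · right; right; right
        rw [hd, Int.sign_eq_neg_one_of_neg hs]; push_cast; ring
      · exact absurd hs hne'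
      · right; right; left
        rw [hd, Int.sign_eq_one_of_pos hs]; push_cast; ring
  · -- horizontal step; second coordinate unchanged since k < |dx| means k+1-|dx| ≤ 0
    right
    have h2 : icl (k+1-|dx|) dy = icl (k-|dx|) dy := by
      rw [icl_nonpos (by omega), icl_nonpos (by omega)]
    have hd : stair δ A dx dy (k+1) - stair δ A dx dy k = ((dx.sign : ℝ) * δ) := by
      rw [key, h2, h1]
      push_cast; ring
    rcases Int.lt_trichotomy dx 0 with hs|hs|hs
    · right; left
      rw [hd, Int.sign_eq_neg_one_of_neg hs]; push_cast; ring
    · exact absurd hs hne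
    · left
      rw [hd, Int.sign_eq_one_of_pos hs]; push_cast; ring

lemma stair_dist (δ : ℝ) (hδ : 0 < δ) (A : ℂ) (dx dy : ℤ) (k : ℤ) :
    dist (stair δ A dx dy k) A ≤ ((|dx| + |dy| : ℤ) : ℝ) * δ := by
  rw [Complex.dist_eq]
  have : stair δ A dx dy k - A =
      ((icl k dx : ℤ) * δ : ℝ) + (((icl (k - |dx|) dy : ℤ) * δ : ℝ)) * Complex.I := by
    unfold stair; ring
  rw [this]
  calc ‖_‖ ≤ |((icl k dx : ℤ) * δ : ℝ)| + |((icl (k - |dx|) dy : ℤ) * δ : ℝ)| := by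
        have := Complex.norm_le_abs_re_add_abs_im
          (((icl k dx : ℤ) * δ : ℝ) + (((icl (k - |dx|) dy : ℤ) * δ : ℝ)) * Complex.I)
        simpa using this
    _ ≤ ((|dx| + |dy| : ℤ) : ℝ) * δ := by
        rw [abs_mul, abs_mul, abs_of_pos hδ]
        have b1 : |((icl k dx : ℤ) : ℝ)| ≤ ((|dx| : ℤ) : ℝ) := by
          exact_mod_cast (by exact_mod_cast icl_abs_le k dx : (|icl k dx| : ℤ) ≤ |dx|)
        have b2 : |((icl (k - |dx|) dy : ℤ) : ℝ)| ≤ ((|dy| : ℤ) : ℝ) := by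
          exact_mod_cast (by exact_mod_cast icl_abs_le (k - |dx|) dy : (|icl (k - |dx|) dy| : ℤ) ≤ |dy|)
        push_cast
        push_cast at b1 b2
        nlinarith [abs_nonneg ((icl k dx : ℤ) : ℝ)]

lemma lat_decomp {δ c₁ c₂ : ℝ} (hδ : 0 < δ) {A B : ℂ}
    (hA : GLat δ c₁ c₂ A) (hB : GLat δ c₁ c₂ B) :
    ∃ dx dy : ℤ, B = A + ((dx:ℝ) * δ : ℝ) + (((dy:ℝ) * δ : ℝ)) * Complex.I ∧
      ((|dx| : ℤ) : ℝ) * δ ≤ dist A B ∧ ((|dy| : ℤ) : ℝ) * δ ≤ dist A B := by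
  obtain ⟨⟨m₁, hm₁⟩, ⟨m₂, hm₂⟩⟩ := hA
  obtain ⟨⟨k₁, hk₁⟩, ⟨k₂, hk₂⟩⟩ := hB
  refine ⟨k₁ - m₁, k₂ - m₂, ?_, ?_, ?_⟩
  · rw [Complex.ext_iff]
    constructor
    · simp only [Complex.add_re, Complex.mul_re, Complex.ofReal_re, Complex.ofReal_im,
        Complex.I_re, Complex.I_im, mul_zero, mul_one, zero_mul]
      rw [hm₁, hk₁]; push_cast; ring
    · simp only [Complex.add_im, Complex.mul_im, Complex.ofReal_re, Complex.ofReal_im,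
        Complex.I_re, Complex.I_im, mul_zero, mul_one, zero_mul]
      rw [hm₂, hk₂]; push_cast; ring
  · have h1 : |B.re - A.re| ≤ dist A B := by
      rw [dist_comm, Complex.dist_eq]
      have := Complex.abs_re_le_norm (B - A)
      simpa using this
    have h2 : B.re - A.re = ((k₁ - m₁ : ℤ) : ℝ) * δ := by
      rw [hm₁, hk₁]; push_cast; ring
    rw [h2] at h1
    rw [abs_mul, abs_of_pos hδ] at h1
    calc ((|k₁ - m₁| : ℤ) : ℝ) * δ = |((k₁ - m₁ : ℤ) : ℝ)| * δ := by rw [Int.cast_abs]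
      _ ≤ dist A B := h1
  · have h1 : |B.im - A.im| ≤ dist A B := by
      rw [dist_comm, Complex.dist_eq]
      have := Complex.abs_im_le_norm (B - A)
      simpa using this
    have h2 : B.im - A.im = ((k₂ - m₂ : ℤ) : ℝ) * δ := by
      rw [hm₂, hk₂]; push_cast; ring
    rw [h2] at h1
    rw [abs_mul, abs_of_pos hδ] at h1
    calc ((|k₂ - m₂| : ℤ) : ℝ) * δ = |((k₂ - m₂ : ℤ) : ℝ)| * δ := by rw [Int.cast_abs]
      _ ≤ dist A B := h1

noncomputable def roundLat (δ c₁ c₂ : ℝ) (p : ℂ) : ℂ :=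
  ⟨c₁ + (round ((p.re - c₁)/δ) : ℤ) * δ, c₂ + (round ((p.im - c₂)/δ) : ℤ) * δ⟩

lemma roundLat_lat (δ c₁ c₂ : ℝ) (p : ℂ) : GLat δ c₁ c₂ (roundLat δ c₁ c₂ p) :=
  ⟨⟨_, rfl⟩, ⟨_, rfl⟩⟩

lemma roundLat_dist {δ : ℝ} (hδ : 0 < δ) (c₁ c₂ : ℝ) (p : ℂ) :
    dist p (roundLat δ c₁ c₂ p) ≤ δ := by
  have key : ∀ u c : ℝ, |u - (c + (round ((u - c)/δ) : ℤ) * δ)| ≤ δ/2 := by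
    intro u c
    have h1 : |(u - c)/δ - round ((u - c)/δ)| ≤ 1/2 := abs_sub_round _
    have h2 : u - (c + (round ((u - c)/δ) : ℤ) * δ) = ((u - c)/δ - round ((u - c)/δ)) * δ := by
      field_simp
      ring
    rw [h2, abs_mul, abs_of_pos hδ]
    nlinarith
  rw [Complex.dist_eq]
  calc ‖p - roundLat δ c₁ c₂ p‖
      ≤ |(p - roundLat δ c₁ c₂ p).re| + |(p - roundLat δ c₁ c₂ p).im| :=
        Complex.norm_le_abs_re_add_abs_im _
    _ ≤ δ/2 + δ/2 := by
        apply add_le_add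
        · exact key p.re c₁
        · exact key p.im c₂
    _ = δ := by ring

lemma cell_coord {δ c u0 : ℝ} (hδ : 0 < δ) (hu : ∀ k : ℤ, u0 ≠ c + k * δ)
    {t : ℝ} (ht0 : 0 ≤ t) (ht1 : t < 1) (k : ℤ) :
    u0 + t * ((c + (round ((u0 - c)/δ) : ℤ) * δ) - u0) ≠ c + k * δ := by
  intro hk
  set u : ℝ := (u0 - c)/δ with hu'
  have hu0 : u0 = c + u * δ := by rw [hu']; field_simp; ring
  have huZ : ∀ j : ℤ, u ≠ j := by
    intro j hj
    exact hu j (by rw [hu0, hj])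
  have hmain : u + t * ((round u : ℤ) - u) = k := by
    have h2 : (u + t * ((round u : ℤ) - u)) * δ = (k : ℝ) * δ := by
      have : u0 + t * ((c + (round u : ℤ) * δ) - u0) = c + (u + t * ((round u : ℤ) - u)) * δ := by
        rw [hu0]; ring
      rw [this] at hk
      linarith
    exact mul_right_cancel₀ (ne_of_gt hδ) h2
  have habs : |u - k| = t * |u - round u| := by
    have : u - k = t * (u - round u) := by linarith [hmain]
    rw [this, abs_mul, _root_.abs_of_nonneg ht0]
  have hr : |u - round u| ≤ 1/2 := abs_sub_round u
  have hne : u ≠ round u := huZ (round u)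
  have hpos : 0 < |u - round u| := abs_pos.2 (sub_ne_zero.2 hne)
  have hlt : |u - k| < 1/2 := by
    rw [habs]
    nlinarith
  have hk' : round u = k := by
    rw [round_eq]
    rw [abs_lt] at hlt
    rw [Int.floor_eq_iff]
    constructor <;> push_cast <;> linarith
  rw [hk'] at hmain
  have : (1 - t) * (u - k) = 0 := by push_cast at hmain ⊢; linarith
  rcases mul_eq_zero.1 this with h|h
  · linarith
  · exact huZ k (by linarith)

/-- points of the segment from p to its rounding, other than the corner, avoid all gridlines -/
lemma cell_segment {δ c₁ c₂ : ℝ} (hδ : 0 < δ) {p x : ℂ}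
    (hre : ∀ k : ℤ, p.re ≠ c₁ + k * δ) (him : ∀ k : ℤ, p.im ≠ c₂ + k * δ)
    (hx : x ∈ segment ℝ p (roundLat δ c₁ c₂ p)) (hxne : x ≠ roundLat δ c₁ c₂ p) :
    (∀ k : ℤ, x.re ≠ c₁ + k * δ) ∧ (∀ k : ℤ, x.im ≠ c₂ + k * δ) := by
  obtain ⟨t, ht, hxt⟩ := seg_param hx
  have ht1 : t < 1 := by
    rcases lt_or_eq_of_le ht.2 with h|h
    · exact h
    · exfalso; apply hxne; rw [hxt, h]; simp
  have hxre : x.re = p.re + t * ((roundLat δ c₁ c₂ p).re - p.re) := by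
    rw [hxt]; simp [Complex.real_smul]
  have hxim : x.im = p.im + t * ((roundLat δ c₁ c₂ p).im - p.im) := by
    rw [hxt]; simp [Complex.real_smul]
  constructor
  · intro k
    rw [hxre]
    exact cell_coord hδ hre ht.1 ht1 k
  · intro k
    rw [hxim]
    exact cell_coord hδ him ht.1 ht1 k

/-- choose a rational offset avoiding two given reals being on lattice -/
lemma offset_exists (δq : ℚ) (hδ : 0 < δq) (x y : ℝ) :
    ∃ c : ℚ, (∀ k : ℤ, x ≠ (c:ℝ) + k * (δq:ℝ)) ∧ (∀ k : ℤ, y ≠ (c:ℝ) + k * (δq:ℝ)) := by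
  have hδR : (0:ℝ) < (δq:ℝ) := by exact_mod_cast hδ
  have excl : ∀ (z : ℝ) (c c' : ℚ), c ≠ c' → |((c:ℝ) - (c':ℝ))| < δq →
      (∃ k : ℤ, z = (c:ℝ) + k * δq) → (∃ k : ℤ, z = (c':ℝ) + k * δq) → False := by
    intro z c c' hne habs hk0 hk0'
    obtain ⟨k, hk⟩ := hk0
    obtain ⟨k', hk'⟩ := hk0'
    have h1 : (c:ℝ) - (c':ℝ) = ((k' - k : ℤ) : ℝ) * δq := by push_cast; linarith
    rw [h1] at habs
    rw [abs_mul, abs_of_pos hδR] at habs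
    have h2 : |((k' - k : ℤ) : ℝ)| < 1 := by
      by_contra h
      push_neg at h
      nlinarith
    have h3 : k' - k = 0 := by
      have := abs_lt.1 h2
      have l1 : (-1 : ℝ) < ((k'-k:ℤ):ℝ) := this.1
      have l2 : ((k'-k:ℤ):ℝ) < 1 := this.2
      have : (-1 : ℤ) < k' - k := by exact_mod_cast l1
      have : (k' - k : ℤ) < 1 := by exact_mod_cast l2
      omega
    apply hne
    rw [h3] at h1
    have hcc : (c:ℝ) = (c':ℝ) := by push_cast at h1; linarith
    exact_mod_cast hcc
  by_contra hcon
  push_neg at hcon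
  have h1 := hcon (δq/4)
  have h2 := hcon (δq/2)
  have h3 := hcon (3*δq/4)
  have d12 : (δq/4 : ℚ) ≠ δq/2 := by intro h; rw [div_eq_div_iff] at h <;> [nlinarith; norm_num; norm_num]
  have d13 : (δq/4 : ℚ) ≠ 3*δq/4 := by intro h; rw [div_eq_div_iff] at h <;> [nlinarith; norm_num; norm_num]
  have d23 : (δq/2 : ℚ) ≠ 3*δq/4 := by intro h; rw [div_eq_div_iff] at h <;> [nlinarith; norm_num; norm_num]
  have a12 : |(((δq/4 : ℚ)):ℝ) - ((δq/2 : ℚ):ℝ)| < δq := by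
    push_cast; rw [abs_lt]; constructor <;> nlinarith
  have a13 : |(((δq/4 : ℚ)):ℝ) - ((3*δq/4 : ℚ):ℝ)| < δq := by
    push_cast; rw [abs_lt]; constructor <;> nlinarith
  have a23 : |(((δq/2 : ℚ)):ℝ) - ((3*δq/4 : ℚ):ℝ)| < δq := by
    push_cast; rw [abs_lt]; constructor <;> nlinarith
  have get : ∀ c : ℚ, ((∀ (k : ℤ), x ≠ ↑c + ↑k * ↑δq) → ∃ k : ℤ, y = ↑c + ↑k * ↑δq) →
      (∃ k : ℤ, x = (c:ℝ) + k * δq) ∨ (∃ k : ℤ, y = (c:ℝ) + k * δq) := by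
    intro c h
    by_cases hA : ∀ (k : ℤ), x ≠ ↑c + ↑k * ↑δq
    · exact Or.inr (h hA)
    · push_neg at hA
      exact Or.inl hA
  rcases get _ h1 with b1|b1 <;> rcases get _ h2 with b2|b2 <;> rcases get _ h3 with b3|b3
  · exact excl x _ _ d12 a12 b1 b2
  · exact excl x _ _ d12 a12 b1 b2
  · exact excl x _ _ d13 a13 b1 b3
  · exact excl y _ _ d23 a23 b2 b3
  · exact excl x _ _ d23 a23 b2 b3
  · exact excl y _ _ d13 a13 b1 b3
  · exact excl y _ _ d12 a12 b1 b2
  · exact excl y _ _ d12 a12 b1 b2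

/-- loop erasure: from any chain, extract a chain with pairwise distinct vertices. -/
lemma erase_loops (P : ℂ → ℂ → Prop) (m : ℕ) : ∀ w : ℕ → ℂ,
    (∀ i < m, P (w i) (w (i+1))) →
    ∃ (M : ℕ) (u : ℕ → ℂ), u 0 = w 0 ∧ u M = w m ∧
      (∀ i < M, P (u i) (u (i+1))) ∧
      (∀ i ≤ M, ∀ j ≤ M, u i = u j → i = j) := by
  induction m using Nat.strong_induction_on with
  | _ m ih =>
    intro w hw
    by_cases hrep : ∃ i j, i < j ∧ j ≤ m ∧ w i = w j
    · obtain ⟨i, j, hij, hjm, hww⟩ := hrep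
      set m' := m - (j - i) with hm'def
      set w' : ℕ → ℂ := fun k => if k ≤ i then w k else w (k + (j - i)) with hw'def
      have hm' : m' < m := by omega
      have hw' : ∀ k < m', P (w' k) (w' (k+1)) := by
        intro k hk
        rcases lt_trichotomy k i with h|h|h
        · have e1 : w' k = w k := by simp [hw'def, Nat.le_of_lt h]
          have e2 : w' (k+1) = w (k+1) := by
            have hki : k + 1 ≤ i := h
            simp [hw'def, hki]
          rw [e1, e2]
          exact hw k (by omega)
        · subst h
          have hjm' : j < m := by omega
          have e1 : w' k = w j := by simp [hw'def, hww]
          have e2 : w' (k+1) = w (j+1) := by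
            have : ¬ (k + 1 ≤ k) := by omega
            simp only [hw'def, this, if_false]
            congr 1
            omega
          rw [e1, e2]
          exact hw j hjm'
        · have e1 : w' k = w (k + (j-i)) := by
            have : ¬ (k ≤ i) := by omega
            simp [hw'def, this]
          have e2 : w' (k+1) = w (k + (j-i) + 1) := by
            have : ¬ (k + 1 ≤ i) := by omega
            simp only [hw'def, this, if_false]
            congr 1
            omega
          rw [e1, e2]
          exact hw (k + (j-i)) (by omega)
      obtain ⟨M, u, h0, hM, hP, hinj⟩ := ih m' hm' w' hw'
      have hend : w' m' = w m := by
        rcases le_or_gt m' i with h|h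
        · have hjm' : j = m := by omega
          have hmi : m' = i := by omega
          simp only [hw'def, hmi, le_refl, if_true]
          rw [hww, hjm']
        · have : ¬ (m' ≤ i) := by omega
          simp only [hw'def, this, if_false]
          congr 1
          omega
      have hstart : w' 0 = w 0 := by simp [hw'def]
      exact ⟨M, u, by rw [h0, hstart], by rw [hM, hend], hP, hinj⟩
    · push_neg at hrep
      refine ⟨m, w, rfl, rfl, hw, ?_⟩
      intro i hi j hj he
      rcases lt_trichotomy i j with h|h|h
      · exact absurd he (hrep i j h hj)
      · exact h
      · exact absurd he.symm (hrep j i h hi)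


lemma seg_mem_param {z w : ℂ} {θ : ℝ} (hθ : θ ∈ Icc (0:ℝ) 1) :
    z + θ • (w - z) ∈ segment ℝ z w := by
  rw [segment_eq_image']
  exact ⟨θ, hθ, rfl⟩

lemma pl_arc (n : ℕ) (hn : 0 < n) (v : ℕ → ℂ)
    (hne : ∀ i < n, v i ≠ v (i+1))
    (hcons : ∀ i, i + 1 < n →
      segment ℝ (v i) (v (i+1)) ∩ segment ℝ (v (i+1)) (v (i+2)) ⊆ {v (i+1)})
    (hfar : ∀ i j, i + 1 < j → j < n →
      segment ℝ (v i) (v (i+1)) ∩ segment ℝ (v j) (v (j+1)) = ∅) :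
    ArcFrom (v 0) (v n) (⋃ i ∈ Finset.range n, segment ℝ (v i) (v (i+1))) := by
  classical
  have hnR : (0:ℝ) < n := by exact_mod_cast hn
  set f : ℝ → ℂ :=
    fun t => v 0 + ∑ i ∈ Finset.range n, (max 0 (min ((n:ℝ)*t - i) 1)) • (v (i+1) - v i)
    with hfdef
  have hcont : Continuous f := by
    apply continuous_const.add
    apply continuous_finset_sum
    intro i _
    exact (Continuous.max continuous_const
      (((continuous_const.mul continuous_id).sub continuous_const).min continuous_const)).smul
      continuous_const
  -- evaluation on subintervals
  have heval : ∀ i, i < n → ∀ t : ℝ, (i:ℝ)/n ≤ t → t ≤ ((i:ℝ)+1)/n →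
      f t = v i + ((n:ℝ)*t - i) • (v (i+1) - v i) := by
    intro i hi t ht1 ht2
    have h1 : (i:ℝ) ≤ n*t := by
      rw [div_le_iff₀ hnR] at ht1; linarith
    have h2 : (n:ℝ)*t ≤ i+1 := by
      rw [le_div_iff₀ hnR] at ht2; linarith
    rw [hfdef]
    simp only
    have hsplit : ∑ j ∈ Finset.range n, (max 0 (min ((n:ℝ)*t - j) 1)) • (v (j+1) - v j)
        = ∑ j ∈ Finset.range (i+1), (max 0 (min ((n:ℝ)*t - j) 1)) • (v (j+1) - v j)
        + ∑ j ∈ Finset.Ico (i+1) n, (max 0 (min ((n:ℝ)*t - j) 1)) • (v (j+1) - v j) :=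
      (Finset.sum_range_add_sum_Ico _ (by omega)).symm
    rw [hsplit]
    have hz : ∑ j ∈ Finset.Ico (i+1) n, (max 0 (min ((n:ℝ)*t - j) 1)) • (v (j+1) - v j) = 0 := by
      apply Finset.sum_eq_zero
      intro j hj
      have hj' : (i:ℝ)+1 ≤ (j:ℝ) := by
        have := (Finset.mem_Ico.1 hj).1
        exact_mod_cast this
      have hm : min ((n:ℝ)*t - j) 1 ≤ 0 := le_trans (min_le_left _ _) (by linarith)
      rw [max_eq_left hm, zero_smul]
    rw [hz, add_zero, Finset.sum_range_succ]
    have hone : ∑ j ∈ Finset.range i, (max 0 (min ((n:ℝ)*t - j) 1)) • (v (j+1) - v j)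
        = ∑ j ∈ Finset.range i, (v (j+1) - v j) := by
      apply Finset.sum_congr rfl
      intro j hj
      have hj0 := Finset.mem_range.1 hj
      have hj' : (j:ℝ) + 1 ≤ (i:ℝ) := by exact_mod_cast hj0
      have hge : (1:ℝ) ≤ (n:ℝ)*t - j := by linarith
      rw [min_eq_right hge, max_eq_right zero_le_one, one_smul]
    rw [hone, Finset.sum_range_sub (f := v)]
    have hcl : max 0 (min ((n:ℝ)*t - i) 1) = (n:ℝ)*t - i := by
      rw [min_eq_left (by linarith), max_eq_right (by linarith)]
    rw [hcl]
    abel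
  -- index selection
  set idx : ℝ → ℕ := fun t => min (⌊(n:ℝ)*t⌋.toNat) (n-1) with hidxdef
  have hidx_lt : ∀ t, idx t < n := by
    intro t
    have : idx t ≤ n - 1 := min_le_right _ _
    omega
  have hidx_le : ∀ t, t ∈ Set.Icc (0:ℝ) 1 →
      ((idx t : ℝ))/n ≤ t ∧ t ≤ ((idx t : ℝ)+1)/n := by
    intro t ht
    have h0 : (0:ℝ) ≤ (n:ℝ)*t := mul_nonneg hnR.le ht.1
    have hF0 : (0:ℤ) ≤ ⌊(n:ℝ)*t⌋ := Int.floor_nonneg.2 h0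
    constructor
    · rw [div_le_iff₀ hnR]
      have h1 : ((idx t : ℕ):ℝ) ≤ ((⌊(n:ℝ)*t⌋.toNat : ℕ):ℝ) := by
        exact_mod_cast Nat.cast_le.2 (min_le_left _ _)
      have h2 : ((⌊(n:ℝ)*t⌋.toNat : ℕ):ℝ) = ((⌊(n:ℝ)*t⌋ : ℤ):ℝ) := by
        exact_mod_cast Int.toNat_of_nonneg hF0
      have h3 : ((⌊(n:ℝ)*t⌋ : ℤ):ℝ) ≤ (n:ℝ)*t := Int.floor_le _
      calc ((idx t : ℕ):ℝ) ≤ _ := h1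
        _ = _ := h2
        _ ≤ (n:ℝ)*t := h3
        _ = t * n := by ring
    · rw [le_div_iff₀ hnR]
      by_cases hc : ⌊(n:ℝ)*t⌋.toNat ≤ n-1
      · have he : idx t = ⌊(n:ℝ)*t⌋.toNat := min_eq_left hc
        have h2 : ((⌊(n:ℝ)*t⌋.toNat : ℕ):ℝ) = ((⌊(n:ℝ)*t⌋ : ℤ):ℝ) := by
          exact_mod_cast Int.toNat_of_nonneg hF0
        have h3 : (n:ℝ)*t < ((⌊(n:ℝ)*t⌋ : ℤ):ℝ) + 1 := Int.lt_floor_add_one _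
        rw [he]
        rw [h2]
        linarith
      · have he : idx t = n - 1 := min_eq_right (by omega)
        have hcast : ((n - 1 : ℕ):ℝ) = (n:ℝ) - 1 := by
          have : (1:ℕ) ≤ n := hn
          push_cast [Nat.cast_sub this]
          ring
        rw [he, hcast]
        have : (n:ℝ)*t ≤ n := by nlinarith [ht.2]
        linarith
  have hidx_mono : ∀ s t : ℝ, s ≤ t → idx s ≤ idx t := by
    intro s t hst
    apply min_le_min _ (le_refl _)
    apply Int.toNat_le_toNat
    apply Int.floor_le_floor
    nlinarith
  -- membership helper
  have hmem : ∀ t, t ∈ Set.Icc (0:ℝ) 1 →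
      f t ∈ segment ℝ (v (idx t)) (v (idx t + 1)) ∧
      f t = v (idx t) + ((n:ℝ)*t - idx t) • (v (idx t + 1) - v (idx t)) ∧
      ((n:ℝ)*t - idx t) ∈ Set.Icc (0:ℝ) 1 := by
    intro t ht
    obtain ⟨hl, hr⟩ := hidx_le t ht
    have hev := heval (idx t) (hidx_lt t) t hl hr
    have hθ : ((n:ℝ)*t - idx t) ∈ Set.Icc (0:ℝ) 1 := by
      constructor
      · rw [div_le_iff₀ hnR] at hl; linarith
      · rw [le_div_iff₀ hnR] at hr; linarith
    exact ⟨hev ▸ seg_mem_param hθ, hev, hθ⟩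
  -- injectivity (ordered version)
  have claim : ∀ s, s ∈ Set.Icc (0:ℝ) 1 → ∀ t, t ∈ Set.Icc (0:ℝ) 1 → s ≤ t →
      f s = f t → s = t := by
    intro s hs t ht hst heq
    set i := idx s with hidef
    set j := idx t with hjdef
    have hij : i ≤ j := hidx_mono s t hst
    obtain ⟨hsseg, hsval, hsθ⟩ := hmem s hs
    obtain ⟨htseg, htval, htθ⟩ := hmem t ht
    rw [← hidef] at hsseg hsval hsθ
    rw [← hjdef] at htseg htval htθ
    have hjlt : j < n := hidx_lt t
    have hilt : i < n := hidx_lt s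
    rcases show j = i ∨ j = i + 1 ∨ i + 1 < j by omega with hc|hc|hc
    · -- same segment
      rw [hc] at htval
      have h1 : ((n:ℝ)*s - i) • (v (i+1) - v i) = ((n:ℝ)*t - i) • (v (i+1) - v i) := by
        have := hsval.symm.trans (heq.trans htval)
        exact add_left_cancel this
      have h2 : (((n:ℝ)*s - i) - ((n:ℝ)*t - i)) • (v (i+1) - v i) = 0 := by
        rw [sub_smul, h1, sub_self]
      rcases smul_eq_zero.1 h2 with h3|h3
      · have : (n:ℝ)*s = (n:ℝ)*t := by linarith [sub_eq_zero.1 h3]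
        exact mul_left_cancel₀ (ne_of_gt hnR) this
      · exact absurd (sub_eq_zero.1 h3) (Ne.symm (hne i hilt))
    · -- consecutive segments
      have hi1 : i + 1 < n := hc ▸ hjlt
      have hint : f s ∈ segment ℝ (v i) (v (i+1)) ∩ segment ℝ (v (i+1)) (v (i+2)) := by
        refine ⟨hsseg, ?_⟩
        rw [heq]
        have htseg' : f t ∈ segment ℝ (v (i+1)) (v (i+1+1)) := by rw [← hc]; exact htseg
        exact htseg'
      have hfs : f s = v (i+1) := hcons i hi1 hint
      -- α = 1
      have hα : (n:ℝ)*s - i = 1 := by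
        have h1 : v i + ((n:ℝ)*s - i) • (v (i+1) - v i) = v i + (1:ℝ) • (v (i+1) - v i) := by
          rw [← hsval, hfs, one_smul]; abel
        have h2 := add_left_cancel h1
        have h3 : (((n:ℝ)*s - i) - 1) • (v (i+1) - v i) = 0 := by
          rw [sub_smul, h2, sub_self]
        rcases smul_eq_zero.1 h3 with h4|h4
        · linarith [sub_eq_zero.1 h4]
        · exact absurd (sub_eq_zero.1 h4) (Ne.symm (hne i hilt))
      -- β = 0
      have hβ : (n:ℝ)*t - j = 0 := by
        have h1 : v j + ((n:ℝ)*t - j) • (v (j+1) - v j) = v j := by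
          rw [← htval, ← heq, hfs, hc]
        have h2 : ((n:ℝ)*t - j) • (v (j+1) - v j) = 0 := by
          have h1' := h1
          rwa [add_eq_left] at h1'
        rcases smul_eq_zero.1 h2 with h3|h3
        · exact h3
        · exact absurd (sub_eq_zero.1 h3) (Ne.symm (hne j hjlt))
      have hns : (n:ℝ)*s = (i:ℝ) + 1 := by linarith
      have hnt : (n:ℝ)*t = (j:ℝ) := by linarith
      have hji : (j:ℝ) = (i:ℝ) + 1 := by exact_mod_cast congrArg (Nat.cast : ℕ → ℝ) hc
      have : (n:ℝ)*s = (n:ℝ)*t := by rw [hns, hnt, hji]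
      exact mul_left_cancel₀ (ne_of_gt hnR) this
    · -- far segments
      exfalso
      have hint : f s ∈ segment ℝ (v i) (v (i+1)) ∩ segment ℝ (v j) (v (j+1)) :=
        ⟨hsseg, heq ▸ htseg⟩
      rw [hfar i j hc hjlt] at hint
      exact hint
  refine ⟨f, hcont.continuousOn, ?_, ?_, ?_, ?_⟩
  · -- injectivity
    intro s hs t ht heq
    rcases le_total s t with h|h
    · exact claim s hs t ht h heq
    · exact (claim t ht s hs h heq.symm).symm
  · -- image
    apply Set.Subset.antisymm
    · rintro x ⟨t, ht, rfl⟩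
      obtain ⟨hseg, _, _⟩ := hmem t ht
      exact Set.mem_iUnion₂.2 ⟨idx t, Finset.mem_range.2 (hidx_lt t), hseg⟩
    · rintro x hx
      simp only [Set.mem_iUnion] at hx
      obtain ⟨i, hi, hx⟩ := hx
      have hi' : i < n := Finset.mem_range.1 hi
      rw [segment_eq_image'] at hx
      obtain ⟨θ, hθ, hxe⟩ := hx
      set t := ((i:ℝ) + θ)/n with htdef
      have hin : (i:ℝ) + 1 ≤ n := by exact_mod_cast hi'
      have ht01 : t ∈ Set.Icc (0:ℝ) 1 := by
        constructor
        · apply div_nonneg _ hnR.le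
          have := hθ.1
          positivity
        · rw [div_le_one hnR]
          linarith [hθ.2]
      have hl : (i:ℝ)/n ≤ t := by
        rw [htdef]
        gcongr
        linarith [hθ.1]
      have hr : t ≤ ((i:ℝ)+1)/n := by
        rw [htdef]
        gcongr
        linarith [hθ.2]
      have hev := heval i hi' t hl hr
      have hnt : (n:ℝ)*t = (i:ℝ)+θ := by rw [htdef]; field_simp
      refine ⟨t, ht01, ?_⟩
      rw [hev, hnt]
      have hxe' : v i + θ • (v (i+1) - v i) = x := hxe
      have hθi : (i:ℝ)+θ - i = θ := by ring
      rw [hθi]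
      exact hxe'
  · -- f 0 = v 0
    have := heval 0 hn 0 (by simp) (by positivity)
    simpa using this
  · -- f 1 = v n
    obtain ⟨m, rfl⟩ : ∃ m, n = m + 1 := ⟨n - 1, by omega⟩
    have hev := heval m (by omega) 1 ?_ ?_
    · rw [hev]
      have : ((m+1:ℕ):ℝ)*1 - m = 1 := by push_cast; ring
      rw [this, one_smul]
      abel
    · rw [div_le_one (by exact_mod_cast Nat.succ_pos m)]
      push_cast
      linarith
    · push_cast
      rw [le_div_iff₀ (by positivity)]
      ring_nf
      rfl


theorem polygonal_arc_in_domain (U : Set ℂ) (hU : IsOpen U) (hUc : IsConnected U)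
    (p q : ℂ) (hp : p ∈ U) (hq : q ∈ U) (hpq : p ≠ q) (ε : ℝ) (hε : 0 < ε) :
    ∃ (n : ℕ) (v : ℕ → ℂ) (P : Set ℂ),
      0 < n ∧ v 0 = p ∧ v n = q ∧
      (∀ i, 0 < i → i < n → IsRationalPoint (v i)) ∧
      (∀ i < n, dist (v i) (v (i + 1)) < ε) ∧
      P = ⋃ i ∈ Finset.range n, segment ℝ (v i) (v (i + 1)) ∧
      ArcFrom p q P ∧ P ⊆ U := by
  classical
  -- 1. a path from p to q in U
  have hpc : IsPathConnected U := (hU.isConnected_iff_isPathConnected).1 hUc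
  obtain ⟨γ, hγmem⟩ := hpc.joinedIn p hp q hq
  set g : ℝ → ℂ := ⇑γ.extend with hgdef
  have hgc : Continuous g := γ.continuous_extend
  have hg0 : g 0 = p := γ.extend_zero
  have hg1 : g 1 = q := γ.extend_one
  have hgU : ∀ t : ℝ, g t ∈ U := by
    intro t
    have : g t = γ (Set.projIcc 0 1 zero_le_one t) := rfl
    rw [this]
    exact hγmem _
  -- 2. Lebesgue radius
  have hK : IsCompact (g '' Set.Icc 0 1) := (isCompact_Icc).image hgc
  have hKU : g '' Set.Icc 0 1 ⊆ U := by
    rintro x ⟨t, _, rfl⟩; exact hgU t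
  obtain ⟨r, hr0, hrsub⟩ := hK.exists_thickening_subset_open hU hKU
  have hball : ∀ t : ℝ, t ∈ Set.Icc (0:ℝ) 1 → Metric.ball (g t) r ⊆ U := by
    intro t ht
    exact (Metric.ball_subset_thickening (Set.mem_image_of_mem g ht) r).trans hrsub
  -- 3. choose rational δ
  have hdpq : 0 < dist p q := dist_pos.2 hpq
  set s0 : ℝ := min (r/10) (min ε (dist p q/5)) with hs0def
  have hs0 : 0 < s0 := by
    apply lt_min (by linarith)
    exact lt_min hε (by linarith)
  obtain ⟨δq, hδq1, hδq2⟩ := exists_rat_btwn hs0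
  have hδq0 : 0 < δq := by exact_mod_cast hδq1
  set δ : ℝ := (δq : ℝ) with hδdef
  have hδ0 : 0 < δ := hδq1
  have hδr : 10 * δ < r := by
    have h1 : s0 ≤ r/10 := min_le_left _ _
    have h2 := hδq2.trans_le h1
    rw [hδdef]; linarith
  have hδε : δ < ε := hδq2.trans_le ((min_le_right _ _).trans (min_le_left _ _))
  have hδpq : 5 * δ < dist p q := by
    have h1 : s0 ≤ dist p q / 5 := (min_le_right _ _).trans (min_le_right _ _)
    have h2 := hδq2.trans_le h1
    rw [hδdef]; linarith
  -- 4. offsets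
  obtain ⟨c1, hc1p, hc1q⟩ := offset_exists δq hδq0 p.re q.re
  obtain ⟨c2, hc2p, hc2q⟩ := offset_exists δq hδq0 p.im q.im
  set c₁ : ℝ := (c1 : ℝ) with hc₁def
  set c₂ : ℝ := (c2 : ℝ) with hc₂def
  have hpne : ∀ z : ℂ, GLat δ c₁ c₂ z → p ≠ z := by
    rintro z ⟨⟨k, hk⟩, -⟩ rfl
    exact hc1p k hk
  have hqne : ∀ z : ℂ, GLat δ c₁ c₂ z → q ≠ z := by
    rintro z ⟨⟨k, hk⟩, -⟩ rfl
    exact hc1q k hk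
  -- 5. uniform continuity and sampling
  have hUC := (isCompact_Icc : IsCompact (Set.Icc (0:ℝ) 1)).uniformContinuousOn_of_continuous
    hgc.continuousOn
  rw [Metric.uniformContinuousOn_iff] at hUC
  obtain ⟨η, hη0, hηd⟩ := hUC δ hδ0
  obtain ⟨m, hm⟩ := exists_nat_gt (1/η)
  have hmR : (0:ℝ) < m := lt_trans (by positivity) hm
  have hm0 : 0 < m := by exact_mod_cast hmR
  have hsampmem : ∀ i : ℕ, i ≤ m → ((i:ℝ)/m) ∈ Set.Icc (0:ℝ) 1 := by
    intro i hi
    constructor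
    · positivity
    · rw [div_le_one hmR]; exact_mod_cast hi
  have hsamp : ∀ i : ℕ, i < m → dist (g ((i:ℝ)/m)) (g (((i+1:ℕ):ℝ)/m)) < δ := by
    intro i hi
    apply hηd _ (hsampmem i (by omega)) _ (hsampmem (i+1) (by omega))
    rw [Real.dist_eq]
    have he : (i:ℝ)/m - ((i+1:ℕ):ℝ)/m = -(1/m) := by
      push_cast
      field_simp
      ring
    rw [he, abs_neg, abs_of_pos (by positivity)]
    rw [div_lt_iff₀ hmR]
    calc (1:ℝ) = η * (1/η) := by field_simp
      _ < η * m := by exact mul_lt_mul_of_pos_left hm hη0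
      _ = η * m := rfl
  -- 6. lattice samples
  set a : ℕ → ℂ := fun i => roundLat δ c₁ c₂ (g ((i:ℝ)/m)) with hadef
  have haLat : ∀ i, GLat δ c₁ c₂ (a i) := fun i => roundLat_lat _ _ _ _
  have hadist : ∀ i : ℕ, dist (g ((i:ℝ)/m)) (a i) ≤ δ := fun i => roundLat_dist hδ0 _ _ _
  have hstep : ∀ i, i < m → dist (a i) (a (i+1)) < 3*δ := by
    intro i hi
    calc dist (a i) (a (i+1))
        ≤ dist (a i) (g ((i:ℝ)/m)) + dist (g ((i:ℝ)/m)) (g (((i+1:ℕ):ℝ)/m))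
          + dist (g (((i+1:ℕ):ℝ)/m)) (a (i+1)) := dist_triangle4 _ _ _ _
      _ < δ + δ + δ := by
          apply add_lt_add_of_lt_of_le
          · apply add_lt_add_of_le_of_lt
            · rw [dist_comm]; exact hadist i
            · exact hsamp i hi
          · exact hadist (i+1)
      _ = 3*δ := by ring
  -- 7. decomposition into integer steps
  have hdecomp : ∀ i : ℕ, ∃ dxi dyi : ℤ,
      a (i+1) = a i + ((dxi:ℝ) * δ : ℝ) + (((dyi:ℝ) * δ : ℝ)) * Complex.I ∧
      ((|dxi| : ℤ) : ℝ) * δ ≤ dist (a i) (a (i+1)) ∧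
      ((|dyi| : ℤ) : ℝ) * δ ≤ dist (a i) (a (i+1)) := by
    intro i
    obtain ⟨dxi, dyi, h1, h2, h3⟩ := lat_decomp hδ0 (haLat i) (haLat (i+1))
    exact ⟨dxi, dyi, h1, h2, h3⟩
  choose dx dy hD hbx hby using hdecomp
  have hdx2 : ∀ i, i < m → |dx i| ≤ 2 ∧ |dy i| ≤ 2 := by
    intro i hi
    have h1 := (hbx i).trans_lt (hstep i hi)
    have h2 := (hby i).trans_lt (hstep i hi)
    constructor
    · by_contra h
      push_neg at h
      have h3 : (3:ℝ) ≤ ((|dx i| : ℤ) : ℝ) := by exact_mod_cast h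
      nlinarith
    · by_contra h
      push_neg at h
      have h3 : (3:ℝ) ≤ ((|dy i| : ℤ) : ℝ) := by exact_mod_cast h
      nlinarith
  -- 8. the walk
  set w : ℕ → ℂ := fun k => stair δ (a (k/4)) (dx (k/4)) (dy (k/4)) ((k % 4 : ℕ) : ℤ) with hwdef
  have hw0 : w 0 = a 0 := by
    show stair δ (a (0/4)) (dx (0/4)) (dy (0/4)) ((0 % 4 : ℕ) : ℤ) = a 0
    norm_num
    exact stair_nonpos _ _ _ _ le_rfl
  have hwN : w (4*m) = a m := by
    show stair δ (a (4*m/4)) (dx (4*m/4)) (dy (4*m/4)) ((4*m % 4 : ℕ) : ℤ) = a m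
    have h1 : 4*m/4 = m := by omega
    have h2 : 4*m % 4 = 0 := by omega
    rw [h1, h2]
    exact stair_nonpos _ _ _ _ (by norm_num)
  have hstair4 : ∀ i, i < m → stair δ (a i) (dx i) (dy i) 4 = a (i+1) := by
    intro i hi
    rw [stair_full]
    · exact (hD i).symm
    · have := hdx2 i hi
      omega
  set PP : ℂ → ℂ → Prop := fun z z' =>
    (z = z' ∨ Adj δ z z') ∧ GLat δ c₁ c₂ z ∧ GLat δ c₁ c₂ z' ∧ segment ℝ z z' ⊆ U with hPPdef
  have hwP : ∀ k, k < 4*m → PP (w k) (w (k+1)) := by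
    intro k hk
    set i := k/4 with hidef
    set j := k%4 with hjdef
    have him : i < m := by omega
    have hj4 : j < 4 := by omega
    have hwk : w k = stair δ (a i) (dx i) (dy i) (j:ℤ) := rfl
    have hwk1 : w (k+1) = stair δ (a i) (dx i) (dy i) ((j:ℤ)+1) := by
      rcases show j < 3 ∨ j = 3 by omega with h|h
      · have e1 : (k+1)/4 = i := by omega
        have e2 : (k+1)%4 = j+1 := by omega
        show stair δ (a ((k+1)/4)) (dx ((k+1)/4)) (dy ((k+1)/4)) (((k+1) % 4 : ℕ) : ℤ) = _
        rw [e1, e2]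
        try congr 1
        try push_cast
        try ring
      · have e1 : (k+1)/4 = i+1 := by omega
        have e2 : (k+1)%4 = 0 := by omega
        show stair δ (a ((k+1)/4)) (dx ((k+1)/4)) (dy ((k+1)/4)) (((k+1) % 4 : ℕ) : ℤ) = _
        rw [e1, e2]
        have h0 : stair δ (a (i+1)) (dx (i+1)) (dy (i+1)) ((0:ℕ):ℤ) = a (i+1) := by
          exact stair_nonpos _ _ _ _ (by norm_num)
        rw [h0, ← hstair4 i him]
        congr 1
        rw [h]
        norm_num
    -- distance bounds
    have hbound : ∀ kz : ℤ, dist (stair δ (a i) (dx i) (dy i) kz) (g ((i:ℝ)/m)) ≤ 5*δ := by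
      intro kz
      calc dist (stair δ (a i) (dx i) (dy i) kz) (g ((i:ℝ)/m))
          ≤ dist (stair δ (a i) (dx i) (dy i) kz) (a i) + dist (a i) (g ((i:ℝ)/m)) :=
            dist_triangle _ _ _
        _ ≤ ((|dx i| + |dy i| : ℤ) : ℝ) * δ + δ := by
            apply add_le_add (stair_dist δ hδ0 _ _ _ _)
            rw [dist_comm]; exact hadist i
        _ ≤ 5*δ := by
            have h4 : ((|dx i| + |dy i| : ℤ) : ℝ) ≤ 4 := by
              have := hdx2 i him
              have : (|dx i| + |dy i| : ℤ) ≤ 4 := by omega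
              exact_mod_cast this
            nlinarith
    refine ⟨?_, ?_, ?_, ?_⟩
    · rcases stair_step δ hδ0 (a i) (dx i) (dy i) (j:ℤ) (by positivity) with h|h
      · left; rw [hwk, hwk1, h]
      · right; rw [hwk, hwk1]; exact h
    · rw [hwk]; exact stair_lat (haLat i) _ _ _
    · rw [hwk1]; exact stair_lat (haLat i) _ _ _
    · have hsub : segment ℝ (w k) (w (k+1)) ⊆ Metric.closedBall (g ((i:ℝ)/m)) (5*δ) := by
        apply (convex_closedBall _ _).segment_subset
        · rw [Metric.mem_closedBall, hwk]; exact hbound _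
        · rw [Metric.mem_closedBall, hwk1]; exact hbound _
      refine hsub.trans ((Metric.closedBall_subset_ball (by linarith)).trans
        (hball _ (hsampmem i (by omega))))
  -- 9. erase loops
  obtain ⟨M, u, hu0, huM, huP, huinj⟩ := erase_loops PP (4*m) w hwP
  set p₀ : ℂ := roundLat δ c₁ c₂ p with hp₀def
  set q₀ : ℂ := roundLat δ c₁ c₂ q with hq₀def
  have ha0 : a 0 = p₀ := by
    show roundLat δ c₁ c₂ (g (((0:ℕ):ℝ)/m)) = p₀
    norm_num [hg0]
    rfl
  have ham : a m = q₀ := by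
    show roundLat δ c₁ c₂ (g (((m:ℕ):ℝ)/m)) = q₀
    rw [div_self (ne_of_gt hmR), hg1]
  have hu0' : u 0 = p₀ := by rw [hu0, hw0, ha0]
  have huM' : u M = q₀ := by rw [huM, hwN, ham]
  have hp₀d : dist p p₀ ≤ δ := roundLat_dist hδ0 _ _ _
  have hq₀d : dist q q₀ ≤ δ := roundLat_dist hδ0 _ _ _
  have hM1 : 1 ≤ M := by
    by_contra h
    push_neg at h
    have hM0 : M = 0 := by omega
    have : p₀ = q₀ := by rw [← hu0', ← huM', hM0]
    have : dist p q ≤ 2*δ := by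
      calc dist p q ≤ dist p p₀ + dist p₀ q := dist_triangle _ _ _
        _ = dist p p₀ + dist q q₀ := by rw [this, dist_comm q₀ q]
        _ ≤ δ + δ := add_le_add hp₀d hq₀d
        _ = 2*δ := by ring
    linarith
  have hune : ∀ i, i < M → u i ≠ u (i+1) := by
    intro i hi h
    have := huinj i (by omega) (i+1) (by omega) h
    omega
  have huAdj : ∀ i, i < M → Adj δ (u i) (u (i+1)) := by
    intro i hi
    rcases (huP i hi).1 with h|h
    · exact absurd h (hune i hi)
    · exact h
  have huLat : ∀ i, i ≤ M → GLat δ c₁ c₂ (u i) := by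
    intro i hi
    rcases lt_or_eq_of_le hi with h|h
    · exact (huP i h).2.1
    · rw [h, huM']; exact roundLat_lat _ _ _ _
  have huU : ∀ i, i < M → segment ℝ (u i) (u (i+1)) ⊆ U := fun i hi => (huP i hi).2.2.2
  -- geometric facts about end segments
  have hApA : ∀ j, j < M → ∀ x, x ∈ segment ℝ p p₀ → x ∈ segment ℝ (u j) (u (j+1)) →
      x = p₀ ∧ (p₀ = u j ∨ p₀ = u (j+1)) := by
    intro j hj x hx1 hx2
    have hxp : x = p₀ := by
      by_contra hnex
      obtain ⟨hre, him⟩ := cell_segment hδ0 hc1p hc2p hx1 hnex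
      rcases edge_on_gridline (huLat j hj.le) (huAdj j hj) hx2 with ⟨k, hk⟩|⟨k, hk⟩
      exacts [hre k hk, him k hk]
    subst hxp
    exact ⟨rfl, lat_on_edge hδ0 (huLat j hj.le) (roundLat_lat _ _ _ _) (huAdj j hj) hx2⟩
  have hAqA : ∀ j, j < M → ∀ x, x ∈ segment ℝ q₀ q → x ∈ segment ℝ (u j) (u (j+1)) →
      x = q₀ ∧ (q₀ = u j ∨ q₀ = u (j+1)) := by
    intro j hj x hx1 hx2
    rw [segment_symm] at hx1
    have hxq : x = q₀ := by
      by_contra hnex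
      obtain ⟨hre, him⟩ := cell_segment hδ0 hc1q hc2q hx1 hnex
      rcases edge_on_gridline (huLat j hj.le) (huAdj j hj) hx2 with ⟨k, hk⟩|⟨k, hk⟩
      exacts [hre k hk, him k hk]
    subst hxq
    exact ⟨rfl, lat_on_edge hδ0 (huLat j hj.le) (roundLat_lat _ _ _ _) (huAdj j hj) hx2⟩
  have hsegp : segment ℝ p p₀ ⊆ Metric.closedBall p δ := by
    apply (convex_closedBall _ _).segment_subset
    · simp [Metric.mem_closedBall, hδ0.le]
    · rw [Metric.mem_closedBall, dist_comm]; exact hp₀d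
  have hsegq : segment ℝ q₀ q ⊆ Metric.closedBall q δ := by
    apply (convex_closedBall _ _).segment_subset
    · rw [Metric.mem_closedBall, dist_comm]; exact hq₀d
    · simp [Metric.mem_closedBall, hδ0.le]
  have hPQ : ∀ x, x ∈ segment ℝ p p₀ → x ∈ segment ℝ q₀ q → False := by
    intro x hx1 hx2
    have h1 : dist x p ≤ δ := hsegp hx1
    have h2 : dist x q ≤ δ := hsegq hx2
    have : dist p q ≤ 2*δ := by
      calc dist p q ≤ dist p x + dist x q := dist_triangle _ _ _
        _ ≤ δ + δ := add_le_add (by rw [dist_comm]; exact h1) h2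
        _ = 2*δ := by ring
    linarith
  -- 10. the chain
  set v : ℕ → ℂ := fun i => if i = 0 then p else if i ≤ M + 1 then u (i-1) else q with hvdef
  have hv0 : v 0 = p := by simp [hvdef]
  have hvmid : ∀ i, 1 ≤ i → i ≤ M+1 → v i = u (i-1) := by
    intro i h1 h2
    show (if i = 0 then p else if i ≤ M + 1 then u (i-1) else q) = u (i-1)
    rw [if_neg (by omega), if_pos h2]
  have hvlast : v (M+2) = q := by
    show (if M+2 = 0 then p else if M+2 ≤ M + 1 then u (M+2-1) else q) = q
    rw [if_neg (by omega), if_neg (by omega)]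
  have hv1 : v 1 = p₀ := by rw [hvmid 1 le_rfl (by omega)]; exact hu0'
  have hvM1 : v (M+1) = q₀ := by
    rw [hvmid (M+1) (by omega) le_rfl]
    show u (M+1-1) = q₀
    rw [show M+1-1 = M by omega, huM']
  have hEg : ∀ i, 1 ≤ i → i ≤ M →
      segment ℝ (v i) (v (i+1)) = segment ℝ (u (i-1)) (u ((i-1)+1)) := by
    intro i h1 h2
    rw [hvmid i h1 (by omega), hvmid (i+1) (by omega) (by omega)]
    have : i + 1 - 1 = (i-1)+1 := by omega
    rw [this]
  have hE0 : segment ℝ (v 0) (v (0+1)) = segment ℝ p p₀ := by rw [hv0, hv1]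
  have hEL : segment ℝ (v (M+1)) (v (M+1+1)) = segment ℝ q₀ q := by
    rw [hvM1, show M+1+1 = M+2 by omega, hvlast]
  -- pl_arc hypotheses
  have hne : ∀ i, i < M+2 → v i ≠ v (i+1) := by
    intro i hi
    rcases show i = 0 ∨ (1 ≤ i ∧ i ≤ M) ∨ i = M+1 by omega with h|⟨h1,h2⟩|h
    · subst h; rw [hv0, show (0:ℕ)+1 = 1 by rfl, hv1]
      exact hpne p₀ (roundLat_lat _ _ _ _)
    · rw [hvmid i h1 (by omega), hvmid (i+1) (by omega) (by omega)]
      rw [show i + 1 - 1 = (i-1)+1 by omega]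
      exact hune (i-1) (by omega)
    · subst h; rw [hvM1, show M+1+1 = M+2 by omega, hvlast]
      exact fun hcon => hqne q₀ (roundLat_lat _ _ _ _) hcon.symm
  have hcons : ∀ i, i + 1 < M+2 →
      segment ℝ (v i) (v (i+1)) ∩ segment ℝ (v (i+1)) (v (i+2)) ⊆ {v (i+1)} := by
    intro i hi
    rintro x ⟨hx1, hx2⟩
    rcases show i = 0 ∨ (1 ≤ i ∧ i ≤ M-1) ∨ i = M by omega with h|⟨h1,h2⟩|h
    · subst h
      rw [hE0] at hx1
      have hx2' : x ∈ segment ℝ (u 0) (u (0+1)) := by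
        have := hEg 1 le_rfl hM1
        rw [show (0:ℕ)+1+1 = 1+1 by rfl] at hx2
        rw [this] at hx2
        exact hx2
      rw [Set.mem_singleton_iff, show (0:ℕ)+1 = 1 by rfl, hv1]
      exact (hApA 0 (by omega) x hx1 hx2').1
    · -- two grid edges
      set j := i - 1 with hjdef2
      have hij : i = j + 1 := by omega
      rw [hEg i h1 (by omega)] at hx1
      have hx2' : x ∈ segment ℝ (u (j+1)) (u (j+1+1)) := by
        rw [show i + 2 = (i+1)+1 by omega] at hx2
        rw [hEg (i+1) (by omega) (by omega)] at hx2
        rw [show i + 1 - 1 = j + 1 by omega] at hx2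
        exact hx2
      have hx1' : x ∈ segment ℝ (u j) (u (j+1)) := hx1
      have hjM : j + 1 < M := by omega
      rcases grid_inter hδ0 (huLat j (by omega)) (huLat (j+1) (by omega))
        (huAdj j (by omega)) (huAdj (j+1) (by omega)) hx1' hx2' with
        ⟨ha, hb⟩|⟨h3,h4⟩|⟨h3,h4⟩
      · rw [Set.mem_singleton_iff, hvmid (i+1) (by omega) (by omega),
          show i + 1 - 1 = j+1 by omega]
        rcases ha with ha|ha
        · rcases hb with hb|hb
          · exfalso
            have : u j = u (j+1) := ha ▸ hb
            have := huinj j (by omega) (j+1) (by omega) this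
            omega
          · exfalso
            have : u j = u (j+1+1) := ha ▸ hb
            have := huinj j (by omega) (j+1+1) (by omega) this
            omega
        · exact ha
      · exfalso
        have := huinj j (by omega) (j+1) (by omega) h3
        omega
      · exfalso
        have := huinj j (by omega) (j+1+1) (by omega) h3
        omega
    · rw [h] at hx1 hx2 ⊢
      -- last pair: grid edge (M-1) and end segment at q
      rw [hEg M hM1 le_rfl] at hx1
      have hx2' : x ∈ segment ℝ q₀ q := by
        rw [show M + 2 = M+1+1 by omega] at hx2
        rw [hEL] at hx2
        exact hx2
      have hMM : M - 1 < M := by omega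
      have := hAqA (M-1) hMM x hx2' (by rw [show (M-1)+1 = M by omega] at hx1 ⊢; exact hx1)
      rw [Set.mem_singleton_iff, hvM1]
      exact this.1
  have hfar : ∀ i j, i + 1 < j → j < M+2 →
      segment ℝ (v i) (v (i+1)) ∩ segment ℝ (v j) (v (j+1)) = ∅ := by
    intro i j hij hj
    rw [Set.eq_empty_iff_forall_notMem]
    rintro x ⟨hx1, hx2⟩
    rcases show (i = 0 ∧ 2 ≤ j ∧ j ≤ M) ∨ (i = 0 ∧ j = M+1) ∨
        (1 ≤ i ∧ j ≤ M) ∨ (1 ≤ i ∧ i ≤ M-1 ∧ j = M+1) by omega with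
      ⟨h0, hj2, hjM⟩|⟨h0, hjM⟩|⟨h1, hjM⟩|⟨h1, h2, hjM⟩
    · subst h0
      rw [hE0] at hx1
      rw [hEg j (by omega) hjM] at hx2
      obtain ⟨hxp, hcase⟩ := hApA (j-1) (by omega) x hx1 hx2
      rcases hcase with h|h
      · have := huinj 0 (by omega) (j-1) (by omega) (hu0'.trans h)
        omega
      · have := huinj 0 (by omega) ((j-1)+1) (by omega) (hu0'.trans h)
        omega
    · subst h0; subst hjM
      rw [hE0] at hx1
      rw [hEL] at hx2
      exact hPQ x hx1 hx2
    · -- two grid edges, far apart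
      rw [hEg i h1 (by omega)] at hx1
      rw [hEg j (by omega) hjM] at hx2
      rcases grid_inter hδ0 (huLat (i-1) (by omega)) (huLat (j-1) (by omega))
        (huAdj (i-1) (by omega)) (huAdj (j-1) (by omega)) hx1 hx2 with
        ⟨ha, hb⟩|⟨h3,h4⟩|⟨h3,h4⟩
      · rcases ha with ha|ha <;> rcases hb with hb|hb
        · have := huinj (i-1) (by omega) (j-1) (by omega) (ha ▸ hb)
          omega
        · have := huinj (i-1) (by omega) ((j-1)+1) (by omega) (ha ▸ hb)
          omega
        · have := huinj ((i-1)+1) (by omega) (j-1) (by omega) (ha ▸ hb)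
          omega
        · have := huinj ((i-1)+1) (by omega) ((j-1)+1) (by omega) (ha ▸ hb)
          omega
      · have := huinj (i-1) (by omega) (j-1) (by omega) h3
        omega
      · have := huinj (i-1) (by omega) ((j-1)+1) (by omega) h3
        omega
    · subst hjM
      rw [hEg i h1 (by omega)] at hx1
      rw [hEL] at hx2
      obtain ⟨hxq, hcase⟩ := hAqA (i-1) (by omega) x hx2 hx1
      rcases hcase with h|h
      · have := huinj M (by omega) (i-1) (by omega) (huM'.trans h)
        omega
      · have := huinj M (by omega) ((i-1)+1) (by omega) (huM'.trans h)
        omega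
  -- 11. final assembly
  refine ⟨M+2, v, ⋃ i ∈ Finset.range (M+2), segment ℝ (v i) (v (i+1)),
    by omega, hv0, hvlast, ?_, ?_, rfl, ?_, ?_⟩
  · -- rational intermediate vertices
    intro i hi0 hiM
    rw [hvmid i (by omega) (by omega)]
    obtain ⟨⟨k1, hk1⟩, ⟨k2, hk2⟩⟩ := huLat (i-1) (by omega)
    constructor
    · exact ⟨c1 + k1 * δq, by rw [hk1]; push_cast; ring⟩
    · exact ⟨c2 + k2 * δq, by rw [hk2]; push_cast; ring⟩
  · -- short edges
    intro i hi
    rcases show i = 0 ∨ (1 ≤ i ∧ i ≤ M) ∨ i = M+1 by omega with h|⟨h1,h2⟩|h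
    · subst h
      rw [hv0, show (0:ℕ)+1 = 1 by rfl, hv1]
      exact lt_of_le_of_lt hp₀d hδε
    · rw [hvmid i h1 (by omega), hvmid (i+1) (by omega) (by omega),
        show i + 1 - 1 = (i-1)+1 by omega]
      rw [Adj.dist hδ0 (huAdj (i-1) (by omega))]
      exact hδε
    · subst h
      rw [hvM1, show M+1+1 = M+2 by omega, hvlast]
      rw [dist_comm]
      exact lt_of_le_of_lt hq₀d hδε
  · -- the arc
    have harc := pl_arc (M+2) (by omega) v hne hcons hfar
    rw [hv0, hvlast] at harc
    exact harc
  · -- subset of U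
    apply Set.iUnion₂_subset
    intro i hi
    have hi' : i < M+2 := Finset.mem_range.1 hi
    rcases show i = 0 ∨ (1 ≤ i ∧ i ≤ M) ∨ i = M+1 by omega with h|⟨h1,h2⟩|h
    · subst h
      rw [hE0]
      have hb : Metric.ball p r ⊆ U := by
        have := hball 0 ⟨le_rfl, zero_le_one⟩
        rwa [hg0] at this
      exact hsegp.trans ((Metric.closedBall_subset_ball (show δ < r by linarith)).trans hb)
    · rw [hEg i h1 h2]
      exact huU (i-1) (by omega)
    · subst h
      rw [hEL]
      have hb : Metric.ball q r ⊆ U := by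
        have := hball 1 ⟨zero_le_one, le_rfl⟩
        rwa [hg1] at this
      exact hsegq.trans ((Metric.closedBall_subset_ball (show δ < r by linarith)).trans hb)
end

section
/- Every ULAC function for a set X ⊆ ℂ is a CIK function for X. -/
/-- `g` is a ULAC function for `X`. -/
def IsULAC (X : Set ℂ) (g : ℕ → ℕ) : Prop :=
  ∀ k : ℕ, ∀ z₀ ∈ X, ∀ z₁ ∈ X, z₀ ≠ z₁ →
    ‖z₀ - z₁‖ ≤ (2:ℝ) ^ (-(g k : ℤ)) →
    ∃ A : Set ℂ, A ⊆ X ∧ ArcFrom z₀ z₁ A ∧ Metric.diam A < (2:ℝ) ^ (-(k : ℤ))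

/-- `g` is a CIK function for `X`. -/
def IsCIK (X : Set ℂ) (g : ℕ → ℕ) : Prop :=
  ∀ k : ℕ, ∀ z₀ ∈ X,
    ∃ C : Set ℂ, IsPreconnected C ∧
      C ⊆ Metric.ball z₀ ((2:ℝ) ^ (-(k : ℤ))) ∩ X ∧
      Metric.ball z₀ ((2:ℝ) ^ (-(g k : ℤ))) ∩ X ⊆ C

theorem ulac_is_cik (X : Set ℂ) (g : ℕ → ℕ) (h : IsULAC X g) : IsCIK X g := by
  intro k z₀ hz₀
  set S : Set ℂ := Metric.ball z₀ ((2:ℝ) ^ (-(g k : ℤ))) ∩ X with hS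
  have hrk : (0:ℝ) < (2:ℝ) ^ (-(k:ℤ)) := by positivity
  have key : ∀ z ∈ S, z ≠ z₀ →
      ∃ A : Set ℂ, A ⊆ X ∧ ArcFrom z₀ z A ∧ Metric.diam A < (2:ℝ) ^ (-(k:ℤ)) := by
    intro z hz hne
    refine h k z₀ hz₀ z hz.2 hne.symm ?_
    have h1 := hz.1
    rw [Metric.mem_ball] at h1
    rw [← Complex.dist_eq, dist_comm]
    exact h1.le
  choose! A hAX hArc hdiam using key
  classical
  set B : ℂ → Set ℂ := fun z => if z = z₀ then {z₀} else A z with hB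
  -- basic facts about B z for z ∈ S
  have hBz₀ : ∀ z ∈ S, z₀ ∈ B z := by
    intro z hz
    by_cases hne : z = z₀
    · simp [hB, hne]
    · obtain ⟨f, hfc, hfi, hfim, hf0, hf1⟩ := hArc z hz hne
      simp only [hB, if_neg hne]
      rw [← hfim]
      exact ⟨0, Set.mem_Icc.2 ⟨le_refl 0, zero_le_one⟩, hf0⟩
  have hBmem : ∀ z ∈ S, z ∈ B z := by
    intro z hz
    by_cases hne : z = z₀
    · simp [hB, hne]
    · obtain ⟨f, hfc, hfi, hfim, hf0, hf1⟩ := hArc z hz hne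
      simp only [hB, if_neg hne]
      rw [← hfim]
      exact ⟨1, Set.mem_Icc.2 ⟨zero_le_one, le_refl 1⟩, hf1⟩
  have hBconn : ∀ z ∈ S, IsPreconnected (B z) := by
    intro z hz
    by_cases hne : z = z₀
    · simp only [hB, if_pos hne]
      exact isPreconnected_singleton
    · obtain ⟨f, hfc, hfi, hfim, hf0, hf1⟩ := hArc z hz hne
      simp only [hB, if_neg hne]
      rw [← hfim]
      exact (isPreconnected_Icc).image f hfc
  have hBsub : ∀ z ∈ S, B z ⊆ Metric.ball z₀ ((2:ℝ) ^ (-(k : ℤ))) ∩ X := by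
    intro z hz
    by_cases hne : z = z₀
    · simp only [hB, if_pos hne]
      intro x hx
      rw [Set.mem_singleton_iff] at hx
      subst hx
      exact ⟨Metric.mem_ball_self hrk, hz₀⟩
    · obtain ⟨f, hfc, hfi, hfim, hf0, hf1⟩ := hArc z hz hne
      simp only [hB, if_neg hne]
      intro x hx
      refine ⟨?_, hAX z hz hne hx⟩
      have hcpt : IsCompact (A z) := by
        rw [← hfim]; exact isCompact_Icc.image_of_continuousOn hfc
      have hz₀A : z₀ ∈ A z := by
        rw [← hfim]; exact ⟨0, Set.mem_Icc.2 ⟨le_refl 0, zero_le_one⟩, hf0⟩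
      have := Metric.dist_le_diam_of_mem hcpt.isBounded hx hz₀A
      exact Metric.mem_ball.2 (lt_of_le_of_lt this (hdiam z hz hne))
  refine ⟨⋃₀ (B '' S), ?_, ?_, ?_⟩
  · refine isPreconnected_sUnion z₀ _ ?_ ?_
    · rintro s ⟨z, hz, rfl⟩; exact hBz₀ z hz
    · rintro s ⟨z, hz, rfl⟩; exact hBconn z hz
  · rintro x ⟨s, ⟨z, hz, rfl⟩, hx⟩
    exact hBsub z hz hx
  · intro z hz
    exact ⟨B z, ⟨z, hz, rfl⟩, hBmem z hz⟩
end

section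
/- If A ⊆ ℂ is an arc, then the complement ℂ \ A is connected. -/
open Complex Set Metric

/-- A continuous nonvanishing function on a convex compact set has a continuous logarithm. -/
lemma exists_continuous_log {E : Type*} [NormedAddCommGroup E] [NormedSpace ℝ E]
    {K : Set E} (hKconv : Convex ℝ K) (hKcpt : IsCompact K) {h : E → ℂ}
    (hh : ContinuousOn h K) (hh0 : ∀ x ∈ K, h x ≠ 0) :
    ∃ L : E → ℂ, ContinuousOn L K ∧ ∀ x ∈ K, Complex.exp (L x) = h x := by
  rcases K.eq_empty_or_nonempty with rfl | ⟨p, hp⟩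
  · exact ⟨0, continuousOn_empty _, fun x hx => hx.elim⟩
  -- minimum of ‖h‖ on K
  obtain ⟨q, hqK, hqmin⟩ := hKcpt.exists_isMinOn ⟨p, hp⟩ (hh.norm)
  set m : ℝ := ‖h q‖ with hm
  have hm0 : 0 < m := norm_pos_iff.mpr (hh0 q hqK)
  -- uniform continuity
  have huc : UniformContinuousOn h K := hKcpt.uniformContinuousOn_of_continuous hh
  rw [Metric.uniformContinuousOn_iff] at huc
  obtain ⟨δ, hδ0, hδ⟩ := huc m hm0
  -- bound on K
  obtain ⟨C, hC⟩ := hKcpt.isBounded.subset_closedBall p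
  have hC0 : 0 ≤ C := by
    have := hC hp; simpa using this
  obtain ⟨N, hN⟩ := exists_nat_gt (C / δ)
  have hN0 : 0 < (N : ℝ) := lt_of_le_of_lt (div_nonneg hC0 hδ0.le) hN
  -- the subdivision points
  set c : ℕ → E → E := fun j x => p + ((j : ℝ) / N) • (x - p) with hc
  have hc0 : ∀ x, c 0 x = p := by intro x; simp [hc]
  have hcN : ∀ x, c N x = x := by
    intro x
    have : ((N : ℝ) / N) = 1 := div_self (ne_of_gt hN0)
    simp [hc, this]
  have hcK : ∀ j, j ≤ N → ∀ x ∈ K, c j x ∈ K := by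
    intro j hj x hx
    have ht0 : (0:ℝ) ≤ (j : ℝ) / N := div_nonneg (Nat.cast_nonneg j) hN0.le
    have ht1 : (j : ℝ) / N ≤ 1 := by
      rw [div_le_one hN0]; exact_mod_cast hj
    have : c j x = (1 - (j : ℝ)/N) • p + ((j : ℝ)/N) • x := by
      simp [hc, smul_sub, sub_smul]; abel
    rw [this]
    exact hKconv hp hx (by linarith) ht0 (by ring)
  have hclose : ∀ j, j < N → ∀ x ∈ K, dist (c (j+1) x) (c j x) < δ := by
    intro j hj x hx
    have : c (j+1) x - c j x = ((1:ℝ) / N) • (x - p) := by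
      simp [hc, sub_smul, div_eq_mul_inv]
      rw [← sub_smul]; congr 1; push_cast; ring
    rw [dist_eq_norm, this, norm_smul]
    have hxp : ‖x - p‖ ≤ C := by
      have := hC hx; rwa [mem_closedBall, dist_eq_norm] at this
    have h1N : ‖(1:ℝ)/N‖ = 1/N := by
      rw [Real.norm_eq_abs, abs_of_pos (by positivity)]
    rw [h1N]
    calc 1/(N:ℝ) * ‖x - p‖ ≤ 1/N * C := by
          apply mul_le_mul_of_nonneg_left hxp (by positivity)
      _ = C / N := by ring
      _ < δ := by
          rw [div_lt_iff₀ hN0]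
          have hCd : C / δ * δ = C := div_mul_cancel₀ C hδ0.ne'
          nlinarith [mul_lt_mul_of_pos_right hN hδ0]
  -- the ratios are in the slit plane
  have hmle : ∀ x ∈ K, m ≤ ‖h x‖ := fun x hx => hqmin hx
  have hratio : ∀ j, j < N → ∀ x ∈ K,
      h (c (j+1) x) / h (c j x) ∈ Complex.slitPlane ∧ h (c (j+1) x) / h (c j x) ≠ 0 := by
    intro j hj x hx
    have hjK := hcK j hj.le x hx
    have hj1K := hcK (j+1) hj x hx
    have hne : h (c j x) ≠ 0 := hh0 _ hjK
    have hne1 : h (c (j+1) x) ≠ 0 := hh0 _ hj1K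
    have hd : ‖h (c (j+1) x) - h (c j x)‖ < m := by
      have := hδ _ hj1K _ hjK (hclose j hj x hx)
      rwa [dist_eq_norm] at this
    have hlt : ‖h (c (j+1) x) / h (c j x) - 1‖ < 1 := by
      rw [div_sub_one hne, norm_div, div_lt_one (norm_pos_iff.mpr hne)]
      exact lt_of_lt_of_le hd (hmle _ hjK)
    constructor
    · have := Complex.mem_slitPlane_of_norm_lt_one hlt
      simpa [add_sub_cancel] using this
    · exact div_ne_zero hne1 hne
  -- define L
  refine ⟨fun x => Complex.log (h p) + ∑ j ∈ Finset.range N,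
      Complex.log (h (c (j+1) x) / h (c j x)), ?_, ?_⟩
  · apply ContinuousOn.add continuousOn_const
    apply continuousOn_finset_sum
    intro j hj
    rw [Finset.mem_range] at hj
    have hcont : ∀ i, i ≤ N → ContinuousOn (fun x => h (c i x)) K := by
      intro i hi
      apply hh.comp
      · exact (continuousOn_const.add (continuousOn_const.smul
          ((continuousOn_id).sub continuousOn_const)))
      · intro x hx; exact hcK i hi x hx
    apply ContinuousOn.clog
    · exact (hcont (j+1) hj).div (hcont j hj.le) (fun x hx => hh0 _ (hcK j hj.le x hx))
    · intro x hx; exact (hratio j hj x hx).1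
  · intro x hx
    rw [Complex.exp_add, Complex.exp_sum, Complex.exp_log (hh0 p hp)]
    have : ∀ j ∈ Finset.range N,
        Complex.exp (Complex.log (h (c (j+1) x) / h (c j x))) = h (c (j+1) x) / h (c j x) := by
      intro j hj
      rw [Finset.mem_range] at hj
      exact Complex.exp_log (hratio j hj x hx).2
    rw [Finset.prod_congr rfl this]
    -- telescoping
    have htel : ∀ n, n ≤ N → ∏ j ∈ Finset.range n, (h (c (j+1) x) / h (c j x))
        = h (c n x) / h p := by
      intro n hn
      induction n with
      | zero => simp [hc0, div_self (hh0 p hp)]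
      | succ k ih =>
        rw [Finset.prod_range_succ, ih (le_of_lt (Nat.lt_of_succ_le hn))]
        rw [div_mul_div_comm]
        rw [mul_comm (h (c k x)) _]
        rw [mul_div_mul_right _ _ (hh0 _ (hcK k (le_of_lt (Nat.lt_of_succ_le hn)) x hx))]
    rw [htel N le_rfl, hcN, mul_div_cancel₀ _ (hh0 p hp)]

/-- `A` is an arc: the image of a continuous injection from `[0,1]` into `ℂ`. -/
def IsArc (A : Set ℂ) : Prop :=
  ∃ f : ℝ → ℂ, ContinuousOn f (Set.Icc 0 1) ∧ Set.InjOn f (Set.Icc 0 1) ∧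
    f '' Set.Icc 0 1 = A

/-- The exterior of a closed ball in `ℂ` is connected. -/
lemma isConnected_compl_closedBall {r : ℝ} (hr : 0 < r) :
    IsConnected ((Metric.closedBall (0:ℂ) r)ᶜ) := by
  have hpc : IsPathConnected (({0}ᶜ : Set ℂ)) :=
    isPathConnected_compl_singleton_of_one_lt_rank
      (by rw [Complex.rank_real_complex]; norm_num) 0
  set g : ℂ → ℂ := fun z => ((1 + r / ‖z‖ : ℝ) : ℂ) * z with hg
  have hgc : ContinuousOn g ({0}ᶜ : Set ℂ) := by
    apply ContinuousOn.mul _ continuousOn_id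
    apply Complex.continuous_ofReal.comp_continuousOn
    exact continuousOn_const.add (continuousOn_const.div continuous_norm.continuousOn
      (fun z hz => norm_ne_zero_iff.mpr hz))
  have himg : g '' ({0}ᶜ : Set ℂ) = (Metric.closedBall (0:ℂ) r)ᶜ := by
    apply Set.eq_of_subset_of_subset
    · rintro w ⟨z, hz, rfl⟩
      have hz0 : (0:ℝ) < ‖z‖ := norm_pos_iff.mpr hz
      simp only [mem_compl_iff, Metric.mem_closedBall, dist_zero_right, not_le]
      have : ‖g z‖ = (1 + r / ‖z‖) * ‖z‖ := by
        rw [hg, norm_mul, Complex.norm_real, Real.norm_eq_abs, abs_of_pos (by positivity)]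
      rw [this, add_mul, one_mul, div_mul_cancel₀ _ hz0.ne']
      linarith
    · intro w hw
      simp only [mem_compl_iff, Metric.mem_closedBall, dist_zero_right, not_le] at hw
      have hw0 : (0:ℝ) < ‖w‖ := lt_trans hr hw
      set z : ℂ := ((1 - r / ‖w‖ : ℝ) : ℂ) * w with hzdef
      have hz0 : z ≠ 0 := by
        apply mul_ne_zero _ (norm_pos_iff.mp hw0)
        simp only [ne_eq, Complex.ofReal_eq_zero]
        have : r / ‖w‖ < 1 := (div_lt_one hw0).mpr hw
        linarith
      have hznorm : ‖z‖ = ‖w‖ - r := by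
        rw [hzdef, norm_mul, Complex.norm_real, Real.norm_eq_abs]
        have h1 : r / ‖w‖ < 1 := (div_lt_one hw0).mpr hw
        rw [abs_of_pos (by linarith), sub_mul, one_mul, div_mul_cancel₀ _ hw0.ne']
      refine ⟨z, hz0, ?_⟩
      rw [hg]
      simp only
      rw [hznorm, hzdef]
      rw [← mul_assoc, ← Complex.ofReal_mul]
      have h1 : ‖w‖ - r ≠ 0 := by linarith
      have h2 : ‖w‖ ≠ 0 := hw0.ne'
      have e1 : 1 + r / (‖w‖ - r) = ‖w‖ / (‖w‖ - r) := by
        rw [eq_div_iff h1, add_mul, one_mul, div_mul_cancel₀ _ h1]; ring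
      have e2 : 1 - r / ‖w‖ = (‖w‖ - r) / ‖w‖ := by
        rw [eq_div_iff h2, sub_mul, one_mul, div_mul_cancel₀ _ h2]
      rw [e1, e2, div_mul_div_comm, mul_comm ‖w‖ _, div_self (mul_ne_zero h1 h2)]
      simp
  rw [← himg]
  exact (hpc.image' hgc).isConnected

theorem complement_of_arc_connected (A : Set ℂ) (hA : IsArc A) :
    IsConnected Aᶜ := by
  classical
  obtain ⟨f, hfc, hfin, hfA⟩ := hA
  have hAcpt : IsCompact A := hfA ▸ (isCompact_Icc.image_of_continuousOn hfc)
  have hAcl : IsClosed A := hAcpt.isClosed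
  obtain ⟨r, hr0, hAr⟩ := hAcpt.isBounded.subset_ball_lt 0 0
  set S : Set ℂ := (Metric.closedBall (0:ℂ) r)ᶜ with hSdef
  have hS : IsConnected S := isConnected_compl_closedBall hr0
  have hSA : S ⊆ Aᶜ := fun z hz hzA =>
    hz (Metric.ball_subset_closedBall (hAr hzA))
  set w₀ : ℂ := ((r + 1 : ℝ) : ℂ) with hw₀def
  have hw₀S : w₀ ∈ S := by
    simp only [hSdef, mem_compl_iff, Metric.mem_closedBall, dist_zero_right, not_le,
      hw₀def, Complex.norm_real, Real.norm_eq_abs]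
    rw [abs_of_pos (by linarith)]; linarith
  -- The key claim: every point of `Aᶜ` is in the same connected component as `w₀`.
  have key : ∀ z₀ ∈ Aᶜ, w₀ ∈ connectedComponentIn Aᶜ z₀ := by
    intro z₀ hz₀
    by_contra hw₀
    set U : Set ℂ := connectedComponentIn Aᶜ z₀ with hUdef
    have hUopen : IsOpen U := hAcl.isOpen_compl.connectedComponentIn
    have hz₀U : z₀ ∈ U := mem_connectedComponentIn hz₀
    have hUA : U ⊆ Aᶜ := connectedComponentIn_subset _ _
    -- U is disjoint from S, hence bounded
    have hUS : ∀ z ∈ U, z ∉ S := by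
      intro z hzU hzS
      have h1 : S ⊆ connectedComponentIn Aᶜ z :=
        hS.isPreconnected.subset_connectedComponentIn hzS hSA
      have h2 : U = connectedComponentIn Aᶜ z := connectedComponentIn_eq hzU
      exact hw₀ (h2 ▸ h1 hw₀S)
    have hUball : U ⊆ Metric.closedBall (0:ℂ) r := by
      intro z hz
      by_contra hzb
      exact hUS z hz hzb
    have hUcl : closure U ⊆ Metric.closedBall (0:ℂ) r :=
      closure_minimal hUball Metric.isClosed_closedBall
    -- frontier U ⊆ A
    have hfront : frontier U ⊆ A := by
      intro x hx
      rw [hUopen.frontier_eq] at hx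
      obtain ⟨hxcl, hxU⟩ := hx
      by_contra hxA
      have hxAc : x ∈ Aᶜ := hxA
      have hVopen : IsOpen (connectedComponentIn Aᶜ x) :=
        hAcl.isOpen_compl.connectedComponentIn
      have hxV : x ∈ connectedComponentIn Aᶜ x := mem_connectedComponentIn hxAc
      obtain ⟨y, hyV, hyU⟩ := mem_closure_iff.mp hxcl _ hVopen hxV
      have h1 : connectedComponentIn Aᶜ x = connectedComponentIn Aᶜ y :=
        connectedComponentIn_eq hyV
      have h2 : U = connectedComponentIn Aᶜ y := connectedComponentIn_eq hyU
      exact hxU (h2 ▸ h1 ▸ hxV)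
    have hz₀A : z₀ ∉ A := hz₀
    -- continuous logarithm of (f t - z₀) on [0,1]
    obtain ⟨ℓ, hℓc, hℓexp⟩ := exists_continuous_log (convex_Icc (0:ℝ) 1) isCompact_Icc
      (hfc.sub continuousOn_const)
      (fun t ht => sub_ne_zero.mpr (fun h => hz₀A (hfA ▸ ⟨t, ht, h⟩)))
    -- transfer the logarithm to A and extend by Tietze
    haveI : CompactSpace (Set.Icc (0:ℝ) 1) := isCompact_iff_compactSpace.mp isCompact_Icc
    set e : (Set.Icc (0:ℝ) 1) → ℂ := fun t => f t with hedef
    have hec : Continuous e := hfc.restrict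
    have hein : Function.Injective e := fun a b hab => Subtype.ext (hfin a.2 b.2 hab)
    have hemb : Topology.IsClosedEmbedding e := hec.isClosedEmbedding hein
    obtain ⟨Λ, hΛ⟩ := ContinuousMap.exists_extension' hemb ⟨(Set.Icc (0:ℝ) 1).restrict ℓ, hℓc.restrict⟩
    have hΛA : ∀ a ∈ A, Complex.exp (Λ a) = a - z₀ := by
      intro a ha
      obtain ⟨t, ht, rfl⟩ := hfA ▸ ha
      have h1 : Λ (e ⟨t, ht⟩) = ℓ t := congrFun hΛ ⟨t, ht⟩
      rw [hedef] at h1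
      simp only at h1
      rw [h1]
      exact hℓexp t ht
    -- the glued nonvanishing function H
    set H : ℂ → ℂ := (closure U).piecewise (fun z => Complex.exp (Λ z))
      (fun z => z - z₀) with hHdef
    have hHcont : Continuous H := by
      apply Continuous.piecewise
      · intro a ha
        have : a ∈ A := hfront (frontier_closure_subset ha)
        exact hΛA a this
      · exact Complex.continuous_exp.comp Λ.continuous
      · exact continuous_id.sub continuous_const
    have hH0 : ∀ z, H z ≠ 0 := by
      intro z
      rw [hHdef]
      by_cases hz : z ∈ closure U
      · rw [Set.piecewise_eq_of_mem _ _ _ hz]; exact Complex.exp_ne_zero _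
      · rw [Set.piecewise_eq_of_notMem _ _ _ hz]
        have : z ≠ z₀ := fun h => hz (h ▸ subset_closure hz₀U)
        exact sub_ne_zero.mpr this
    have hHout : ∀ z, z ∉ closure U → H z = z - z₀ := fun z hz =>
      Set.piecewise_eq_of_notMem _ _ _ hz
    -- continuous logarithm of H on a big closed ball
    set R : ℝ := r + ‖z₀‖ + 1 with hRdef
    have hR0 : 0 < R := by positivity
    obtain ⟨L, hLc, hLexp⟩ := exists_continuous_log (convex_closedBall z₀ R)
      (isCompact_closedBall z₀ R) hHcont.continuousOn (fun z _ => hH0 z)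
    -- the circle path
    set γ : ℝ → ℂ := fun t => z₀ + (R : ℂ) * Complex.exp ((t : ℂ) * Complex.I) with hγdef
    have hγc : Continuous γ := by
      apply continuous_const.add
      exact continuous_const.mul (Complex.continuous_exp.comp
        (Complex.continuous_ofReal.mul continuous_const))
    have hγnorm : ∀ t : ℝ, ‖γ t - z₀‖ = R := by
      intro t
      rw [hγdef]
      simp only [add_sub_cancel_left, norm_mul, Complex.norm_real]
      rw [Complex.norm_exp_ofReal_mul_I]
      simp [abs_of_pos hR0]
    have hγmem : ∀ t : ℝ, γ t ∈ Metric.closedBall z₀ R := by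
      intro t
      rw [Metric.mem_closedBall, dist_eq_norm, hγnorm]
    have hγout : ∀ t : ℝ, γ t ∉ closure U := by
      intro t ht
      have h1 := hUcl ht
      rw [Metric.mem_closedBall, dist_zero_right] at h1
      have h2 : ‖γ t - z₀‖ ≤ ‖γ t‖ + ‖z₀‖ := norm_sub_le _ _
      rw [hγnorm] at h2
      rw [hRdef] at h2
      linarith
    have hγH : ∀ t : ℝ, Complex.exp (L (γ t)) = (R : ℂ) * Complex.exp ((t : ℂ) * Complex.I) := by
      intro t
      rw [hLexp _ (hγmem t), hHout _ (hγout t), hγdef]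
      simp
    -- the winding function
    set φ : ℝ → ℂ := fun t =>
      L (γ t) - ((Real.log R : ℂ) + (t : ℂ) * Complex.I) with hφdef
    have hφc : Continuous φ := by
      apply Continuous.sub
      · exact hLc.comp_continuous hγc hγmem
      · exact continuous_const.add (Complex.continuous_ofReal.mul continuous_const)
    have hexpφ : ∀ t : ℝ, Complex.exp (φ t) = 1 := by
      intro t
      rw [hφdef]
      simp only
      rw [Complex.exp_sub, hγH t, Complex.exp_add]
      rw [← Complex.ofReal_exp, Real.exp_log hR0]
      rw [div_self (mul_ne_zero (by exact_mod_cast hR0.ne') (Complex.exp_ne_zero _))]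
    have hint : ∀ t : ℝ, ∃ n : ℤ, (φ t).im = n * (2 * Real.pi) := by
      intro t
      obtain ⟨n, hn⟩ := Complex.exp_eq_one_iff.mp (hexpφ t)
      refine ⟨n, ?_⟩
      rw [hn]
      simp [Complex.mul_im]
    set ψ : ℝ → ℝ := fun t => (φ t).im with hψdef
    have hψc : Continuous ψ := Complex.continuous_im.comp hφc
    have hγper : γ (2 * Real.pi) = γ 0 := by
      have hco : ((2 * Real.pi : ℝ) : ℂ) * Complex.I = 2 * (Real.pi : ℂ) * Complex.I := by
        push_cast; ring
      rw [hγdef]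
      simp only [hco, Complex.exp_two_pi_mul_I, Complex.ofReal_zero, zero_mul,
        Complex.exp_zero]
    have hψper : ψ (2 * Real.pi) = ψ 0 - 2 * Real.pi := by
      show (φ (2 * Real.pi)).im = (φ 0).im - 2 * Real.pi
      rw [hφdef]
      simp only [hγper]
      simp [Complex.sub_im, Complex.add_im, Complex.mul_im]
    -- intermediate value contradiction
    have hπ : 0 < Real.pi := Real.pi_pos
    have hIVT : ψ 0 - Real.pi ∈ ψ '' Set.Icc 0 (2 * Real.pi) := by
      apply intermediate_value_Icc' (by linarith) hψc.continuousOn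
      rw [hψper]
      constructor <;> linarith
    obtain ⟨t, _, hψt⟩ := hIVT
    obtain ⟨k, hk⟩ := hint t
    obtain ⟨n, hn⟩ := hint 0
    have hψt' : (φ t).im = (φ 0).im - Real.pi := hψt
    have hzero : ((2 * k - 2 * n + 1 : ℤ) : ℝ) * Real.pi = 0 := by
      push_cast
      nlinarith [hψt', hk, hn]
    have : ((2 * k - 2 * n + 1 : ℤ) : ℝ) = 0 :=
      (mul_eq_zero.mp hzero).resolve_right hπ.ne'
    have : (2 * k - 2 * n + 1 : ℤ) = 0 := by exact_mod_cast this
    omega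
  -- conclude
  refine ⟨⟨w₀, hSA hw₀S⟩, ?_⟩
  have hEq : Aᶜ = connectedComponentIn Aᶜ w₀ := by
    apply Set.eq_of_subset_of_subset
    · intro z hz
      have h1 : connectedComponentIn Aᶜ z = connectedComponentIn Aᶜ w₀ :=
        connectedComponentIn_eq (key z hz)
      exact h1 ▸ mem_connectedComponentIn hz
    · exact connectedComponentIn_subset _ _
  rw [hEq]
  exact isPreconnected_connectedComponentIn
end

section
/- Let A be an arc contained in the closed unit disk such that at most one endpoint of A lies on the unit circle and no other point of A lies on the unit circle. Then the open unit disk minus A is connected. -/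
open Set Complex Real



lemma prod_tele (g : ℕ → ℂ) (hg : ∀ i, g i ≠ 0) (n : ℕ) :
    ∏ i ∈ Finset.range n, g (i+1) / g i = g n / g 0 := by
  induction n with
  | zero => simp [div_self (hg 0)]
  | succ n ih =>
      rw [Finset.prod_range_succ, ih, div_mul_div_comm, mul_comm (g n)]
      rw [mul_div_mul_right _ _ (hg n)]

lemma ball_slit {z : ℂ} (h : ‖z - 1‖ < 1) : z ∈ Complex.slitPlane := by
  rw [Complex.mem_slitPlane_iff]
  left
  have h1 := Complex.abs_re_le_norm (z - 1)
  have h2 : |(z - 1).re| < 1 := lt_of_le_of_lt h1 h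
  simp only [Complex.sub_re, Complex.one_re] at h2
  have h3 := abs_lt.mp h2
  linarith [h3.1]

lemma ratio_slit {x y : ℂ} (hy : y ≠ 0) (h : dist x y < ‖y‖) :
    x / y ∈ Complex.slitPlane ∧ x / y ≠ 0 := by
  have hy' : 0 < ‖y‖ := by
    simpa [norm_pos_iff] using hy
  have hxy : ‖x / y - 1‖ < 1 := by
    rw [div_sub_one hy, norm_div, div_lt_one hy']
    simpa [Complex.dist_eq] using h
  refine ⟨ball_slit hxy, ?_⟩
  intro h0
  rw [h0] at hxy
  norm_num at hxy

/-- Path lifting for `exp` on an interval. -/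
lemma exists_log_lift {γ : ℝ → ℂ} {a b : ℝ} (hab : a ≤ b)
    (hγ : ContinuousOn γ (Icc a b)) (hne : ∀ t ∈ Icc a b, γ t ≠ 0) :
    ∃ h : ℝ → ℂ, ContinuousOn h (Icc a b) ∧ ∀ t ∈ Icc a b, Complex.exp (h t) = γ t := by
  -- minimum of |γ|
  obtain ⟨t₀, ht₀, hmin⟩ := isCompact_Icc.exists_isMinOn (nonempty_Icc.mpr hab)
    (hγ.norm)
  set m : ℝ := ‖γ t₀‖ with hm
  have hmpos : 0 < m := by simpa [hm, norm_pos_iff] using hne t₀ ht₀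
  have hmle : ∀ t ∈ Icc a b, m ≤ ‖γ t‖ := fun t ht => hmin ht
  -- uniform continuity
  have huc := isCompact_Icc.uniformContinuousOn_of_continuous hγ
  rw [Metric.uniformContinuousOn_iff] at huc
  obtain ⟨δ, hδ, hucδ⟩ := huc m hmpos
  obtain ⟨n, hn⟩ := exists_nat_gt ((b - a) / δ)
  have hn1 : 0 < (n:ℝ) + 1 := by positivity
  set ε := (b - a) / ((n:ℝ) + 1) with hε
  have hεδ : ε < δ := by
    rw [hε, div_lt_iff₀ hn1]
    have h5 : (b - a) / δ < (n:ℝ) + 1 := lt_of_lt_of_le hn (by linarith)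
    have h6 : b - a = ((b-a)/δ) * δ := by field_simp
    nlinarith
  have hεnn : 0 ≤ ε := by
    apply div_nonneg (by linarith) (le_of_lt hn1)
  set N := n + 1 with hN
  set T : ℕ → ℝ := fun i => a + i * ε with hT
  have hTmem : ∀ t ∈ Icc a b, ∀ i : ℕ, min t (T i) ∈ Icc a b := by
    intro t ht i
    constructor
    · apply le_min ht.1
      simp only [hT]
      nlinarith [hεnn, Nat.cast_nonneg (α := ℝ) i]
    · exact le_trans (min_le_left _ _) ht.2
  have hTstep : ∀ t : ℝ, ∀ i : ℕ, |min t (T (i+1)) - min t (T i)| < δ := by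
    intro t i
    have h1 : T i ≤ T (i+1) := by
      simp only [hT]; push_cast; nlinarith
    have h2 : T (i+1) - T i = ε := by simp only [hT]; push_cast; ring
    rcases le_total t (T i) with h | h
    · rw [min_eq_left (le_trans h h1), min_eq_left h]; simpa using lt_of_le_of_lt hεnn hεδ
    · rcases le_total t (T (i+1)) with h' | h'
      · rw [min_eq_left h', min_eq_right h]
        rw [_root_.abs_of_nonneg (by linarith : (0:ℝ) ≤ t - T i)]
        calc t - T i ≤ T (i+1) - T i := by linarith
        _ = ε := h2
        _ < δ := hεδ
      · rw [min_eq_right h', min_eq_right h, h2, _root_.abs_of_nonneg hεnn]; exact hεδ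
  -- the ratio facts
  have hratio : ∀ t ∈ Icc a b, ∀ i : ℕ,
      γ (min t (T (i+1))) / γ (min t (T i)) ∈ Complex.slitPlane ∧
      γ (min t (T (i+1))) / γ (min t (T i)) ≠ 0 := by
    intro t ht i
    apply ratio_slit (hne _ (hTmem t ht i))
    calc dist (γ (min t (T (i+1)))) (γ (min t (T i))) < m := by
          apply hucδ _ (hTmem t ht (i+1)) _ (hTmem t ht i)
          rw [Real.dist_eq]; exact hTstep t i
    _ ≤ ‖γ (min t (T i))‖ := hmle _ (hTmem t ht i)
  refine ⟨fun t => Complex.log (γ a) + ∑ i ∈ Finset.range N,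
      Complex.log (γ (min t (T (i+1))) / γ (min t (T i))), ?_, ?_⟩
  · apply ContinuousOn.add continuousOn_const
    apply continuousOn_finset_sum
    intro i _
    apply ContinuousOn.clog
    · apply ContinuousOn.div
      · exact hγ.comp (Continuous.continuousOn (continuous_id.min continuous_const)) (fun t ht => hTmem t ht (i+1))
      · exact hγ.comp (Continuous.continuousOn (continuous_id.min continuous_const)) (fun t ht => hTmem t ht i)
      · intro t ht; exact hne _ (hTmem t ht i)
    · intro t ht; exact (hratio t ht i).1
  · intro t ht
    rw [Complex.exp_add, Complex.exp_sum]
    have : ∀ i ∈ Finset.range N, Complex.exp (Complex.log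
        (γ (min t (T (i+1))) / γ (min t (T i)))) = γ (min t (T (i+1))) / γ (min t (T i)) := by
      intro i _; exact Complex.exp_log (hratio t ht i).2
    rw [Finset.prod_congr rfl this, prod_tele (fun i => γ (min t (T i)))
        (fun i => hne _ (hTmem t ht i)) N]
    have hTN : b ≤ T N := by
      simp only [hT, hN, hε]
      push_cast
      rw [mul_div_cancel₀]
      · linarith
      · linarith
    have h1 : min t (T N) = t := min_eq_left (le_trans ht.2 hTN)
    have h2 : min t (T 0) = a := by
      simp only [hT]; push_cast; rw [zero_mul, add_zero]; exact min_eq_right ht.1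
    rw [h1, h2, Complex.exp_log (hne a (left_mem_Icc.mpr hab))]
    rw [mul_comm]; exact div_mul_cancel₀ _ (hne a (left_mem_Icc.mpr hab))

lemma winding_unique {h h' : ℝ → ℂ} (hc : ContinuousOn h (Icc 0 1))
    (hc' : ContinuousOn h' (Icc 0 1))
    (heq : ∀ t ∈ Icc (0:ℝ) 1, Complex.exp (h t) = Complex.exp (h' t)) :
    h 1 - h 0 = h' 1 - h' 0 := by
  have h2πI : (2 * (π:ℂ) * I) ≠ 0 := by
    simp [Real.pi_ne_zero, Complex.I_ne_zero]
  set d : ℝ → ℝ := fun t => ((h t - h' t) / (2 * (π:ℂ) * I)).re with hd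
  have hdint : ∀ t ∈ Icc (0:ℝ) 1, ∃ n : ℤ, d t = n ∧ h t - h' t = n * (2 * (π:ℂ) * I) := by
    intro t ht
    have h1 : Complex.exp (h t - h' t) = 1 := by
      rw [Complex.exp_sub, heq t ht, div_self (Complex.exp_ne_zero _)]
    obtain ⟨n, hn⟩ := Complex.exp_eq_one_iff.mp h1
    refine ⟨n, ?_, hn⟩
    rw [hd]
    simp only [hn, mul_div_assoc, div_self h2πI, mul_one]
    simp
  have hdc : ContinuousOn d (Icc 0 1) :=
    Complex.continuous_re.comp_continuousOn ((hc.sub hc').div_const _)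
  have him : IsPreconnected (d '' Icc 0 1) := (isPreconnected_Icc).image d hdc
  have h01 : (0:ℝ) ∈ Icc (0:ℝ) 1 := by norm_num
  have h11 : (1:ℝ) ∈ Icc (0:ℝ) 1 := by norm_num
  obtain ⟨n₀, hn₀, hv₀⟩ := hdint 0 h01
  obtain ⟨n₁, hn₁, hv₁⟩ := hdint 1 h11
  have hkey : n₀ = n₁ := by
    by_contra hne
    have hOC := him.ordConnected
    set k₀ : ℤ := min n₀ n₁ with hk0
    set k₁ : ℤ := max n₀ n₁ with hk1
    have hk01 : k₀ + 1 ≤ k₁ := by omega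
    have hmem0 : ((k₀:ℝ)) ∈ d '' Icc 0 1 := by
      rcases min_choice n₀ n₁ with h | h
      · exact ⟨0, h01, by rw [hn₀, hk0, h]⟩
      · exact ⟨1, h11, by rw [hn₁, hk0, h]⟩
    have hmem1 : ((k₁:ℝ)) ∈ d '' Icc 0 1 := by
      rcases max_choice n₀ n₁ with h | h
      · exact ⟨0, h01, by rw [hn₀, hk1, h]⟩
      · exact ⟨1, h11, by rw [hn₁, hk1, h]⟩
    have hmem : ((k₀:ℝ) + 1/2) ∈ d '' Icc 0 1 := by
      apply hOC.out hmem0 hmem1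
      have : (k₀:ℝ) + 1 ≤ k₁ := by exact_mod_cast hk01
      constructor <;> [linarith; linarith]
    obtain ⟨t, ht, hval⟩ := hmem
    obtain ⟨n, hn, -⟩ := hdint t ht
    rw [hn] at hval
    have hr : (2*n : ℝ) = 2*k₀ + 1 := by linarith
    have : (2*n : ℤ) = 2*k₀ + 1 := by exact_mod_cast hr
    omega
  rw [hkey] at hv₀
  linear_combination hv₁ - hv₀

noncomputable def myloop (z₀ : ℂ) (ρ θ : ℝ) : ℂ := z₀ + ρ * Complex.exp ((2 * π * θ : ℝ) * I)

lemma myloop_dist (z₀ : ℂ) (ρ θ : ℝ) (hρ : 0 ≤ ρ) : dist (myloop z₀ ρ θ) z₀ = ρ := by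
  simp only [myloop, Complex.dist_eq, add_sub_cancel_left]
  rw [norm_mul, Complex.norm_exp]
  simp [Complex.norm_real, Real.norm_eq_abs, _root_.abs_of_nonneg hρ]

lemma myloop_cont (z₀ : ℂ) (ρ : ℝ) : Continuous (myloop z₀ ρ) := by
  unfold myloop
  fun_prop

lemma myloop_period (z₀ : ℂ) (ρ : ℝ) : myloop z₀ ρ 1 = myloop z₀ ρ 0 := by
  simp only [myloop]
  have h1 : ((2 * π * (1:ℝ) : ℝ) : ℂ) * I = 2 * (π:ℂ) * I := by push_cast; ring
  have h0 : ((2 * π * (0:ℝ) : ℝ) : ℂ) * I = 0 := by push_cast; ring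
  rw [h1, h0, Complex.exp_two_pi_mul_I, Complex.exp_zero]


lemma myloop_dist2 (z₀ : ℂ) (ρ ρ' θ : ℝ) :
    dist (myloop z₀ ρ' θ) (myloop z₀ ρ θ) = |ρ' - ρ| := by
  simp only [myloop, Complex.dist_eq]
  have : z₀ + ↑ρ' * Complex.exp ((2 * π * θ : ℝ) * I) -
      (z₀ + ↑ρ * Complex.exp ((2 * π * θ : ℝ) * I)) =
      ((ρ' - ρ : ℝ) : ℂ) * Complex.exp ((2 * π * θ : ℝ) * I) := by push_cast; ring
  rw [this, norm_mul, Complex.norm_real, Real.norm_eq_abs, Complex.norm_exp]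
  have hre : (((2 * π * θ:ℝ):ℂ) * I).re = 0 := by simp
  rw [hre, Real.exp_zero, mul_one]

lemma winding_annulus {z₀ : ℂ} {F : ℂ → ℂ} {r R : ℝ} (hr : 0 < r) (hrR : r ≤ R)
    (hF : ContinuousOn F (Metric.closedBall z₀ R \ Metric.ball z₀ r))
    (hF0 : ∀ z ∈ Metric.closedBall z₀ R \ Metric.ball z₀ r, F z ≠ 0)
    {h₁ h₂ : ℝ → ℂ} (hc₁ : ContinuousOn h₁ (Icc 0 1)) (hc₂ : ContinuousOn h₂ (Icc 0 1))
    (hl₁ : ∀ θ ∈ Icc (0:ℝ) 1, Complex.exp (h₁ θ) = F (myloop z₀ r θ))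
    (hl₂ : ∀ θ ∈ Icc (0:ℝ) 1, Complex.exp (h₂ θ) = F (myloop z₀ R θ)) :
    h₁ 1 - h₁ 0 = h₂ 1 - h₂ 0 := by
  set ann := Metric.closedBall z₀ R \ Metric.ball z₀ r with hann
  have hannK : IsCompact ann :=
    (isCompact_closedBall z₀ R).diff Metric.isOpen_ball
  have hmemloop : ∀ ρ ∈ Icc r R, ∀ θ : ℝ, myloop z₀ ρ θ ∈ ann := by
    intro ρ hρ θ
    have hd := myloop_dist z₀ ρ θ (le_trans hr.le hρ.1)
    constructor
    · rw [Metric.mem_closedBall, hd]; exact hρ.2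
    · rw [Metric.mem_ball, not_lt, hd]; exact hρ.1
  have hannne : ann.Nonempty := ⟨myloop z₀ r 0, hmemloop r ⟨le_refl r, hrR⟩ 0⟩
  obtain ⟨w₀, hw₀, hminw⟩ := hannK.exists_isMinOn hannne hF.norm
  set m : ℝ := ‖F w₀‖ with hm
  have hmpos : 0 < m := by simpa [hm, norm_pos_iff] using hF0 w₀ hw₀
  have hmle : ∀ z ∈ ann, m ≤ ‖F z‖ := fun z hz => hminw hz
  have huc := hannK.uniformContinuousOn_of_continuous hF
  rw [Metric.uniformContinuousOn_iff] at huc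
  obtain ⟨δ, hδ, hucδ⟩ := huc m hmpos
  set c := h₁ 1 - h₁ 0 with hc
  set S : Set ℝ := {ρ | ρ ∈ Icc r R ∧ ∃ h : ℝ → ℂ, ContinuousOn h (Icc 0 1) ∧
      (∀ θ ∈ Icc (0:ℝ) 1, Complex.exp (h θ) = F (myloop z₀ ρ θ)) ∧ h 1 - h 0 = c} with hS
  have transfer : ∀ ρ ∈ Icc r R, ∀ ρ' ∈ Icc r R, |ρ' - ρ| < δ → ρ ∈ S → ρ' ∈ S := by
    intro ρ hρ ρ' hρ' hdist hρS
    obtain ⟨-, h, hhc, hhl, hhw⟩ := hρS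
    have hratio : ∀ θ ∈ Icc (0:ℝ) 1,
        F (myloop z₀ ρ' θ) / F (myloop z₀ ρ θ) ∈ Complex.slitPlane ∧
        F (myloop z₀ ρ' θ) / F (myloop z₀ ρ θ) ≠ 0 := by
      intro θ hθ
      apply ratio_slit (hF0 _ (hmemloop ρ hρ θ))
      calc dist (F (myloop z₀ ρ' θ)) (F (myloop z₀ ρ θ)) < m := by
            apply hucδ _ (hmemloop ρ' hρ' θ) _ (hmemloop ρ hρ θ)
            rw [myloop_dist2]; exact hdist
      _ ≤ ‖F (myloop z₀ ρ θ)‖ := hmle _ (hmemloop ρ hρ θ)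
    have hFcont : ∀ σ ∈ Icc r R, ContinuousOn (fun θ : ℝ => F (myloop z₀ σ θ)) (Icc 0 1) := by
      intro σ hσ
      exact hF.comp (myloop_cont z₀ σ).continuousOn (fun θ _ => hmemloop σ hσ θ)
    refine ⟨hρ', fun θ => h θ + Complex.log (F (myloop z₀ ρ' θ) / F (myloop z₀ ρ θ)), ?_, ?_, ?_⟩
    · apply hhc.add
      apply ContinuousOn.clog
      · exact (hFcont ρ' hρ').div (hFcont ρ hρ) (fun θ hθ => hF0 _ (hmemloop ρ hρ θ))
      · exact fun θ hθ => (hratio θ hθ).1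
    · intro θ hθ
      rw [Complex.exp_add, hhl θ hθ, Complex.exp_log (hratio θ hθ).2]
      rw [mul_comm]
      exact div_mul_cancel₀ _ (hF0 _ (hmemloop ρ hρ θ))
    · have hper' : myloop z₀ ρ' 1 = myloop z₀ ρ' 0 := myloop_period z₀ ρ'
      have hper : myloop z₀ ρ 1 = myloop z₀ ρ 0 := myloop_period z₀ ρ
      simp only [hper, hper']
      rw [← hhw]; ring
  set u : Set ℝ := ⋃ ρ ∈ S, Metric.ball ρ δ with hu
  set v : Set ℝ := ⋃ ρ ∈ Icc r R \ S, Metric.ball ρ δ with hv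
  have hou : IsOpen u := isOpen_biUnion (fun _ _ => Metric.isOpen_ball)
  have hov : IsOpen v := isOpen_biUnion (fun _ _ => Metric.isOpen_ball)
  have hrS : r ∈ S := ⟨⟨le_refl r, hrR⟩, h₁, hc₁, hl₁, rfl⟩
  have hcover : Icc r R ⊆ u ∪ v := by
    intro ρ hρ
    by_cases hρS : ρ ∈ S
    · exact Or.inl (mem_biUnion hρS (Metric.mem_ball_self hδ))
    · exact Or.inr (mem_biUnion ⟨hρ, hρS⟩ (Metric.mem_ball_self hδ))
  have hdisj : ∀ x, x ∈ Icc r R → x ∈ u → x ∈ v → False := by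
    intro x hx hxu hxv
    obtain ⟨ρ₁, hρ₁S, hx1⟩ := mem_iUnion₂.mp hxu
    obtain ⟨ρ₂, hρ₂, hx2⟩ := mem_iUnion₂.mp hxv
    rw [Metric.mem_ball, Real.dist_eq] at hx1 hx2
    have hxS : x ∈ S := transfer ρ₁ hρ₁S.1 x hx hx1 hρ₁S
    have : ρ₂ ∈ S := by
      apply transfer x hx ρ₂ hρ₂.1 _ hxS
      rw [abs_sub_comm]; exact hx2
    exact hρ₂.2 this
  have hRu : R ∈ u := by
    have hRmem : R ∈ Icc r R := ⟨hrR, le_refl R⟩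
    rcases hcover hRmem with h | h
    · exact h
    · exfalso
      have h1 : (Icc r R ∩ u).Nonempty := ⟨r, ⟨le_refl r, hrR⟩,
        mem_biUnion hrS (Metric.mem_ball_self hδ)⟩
      have h2 : (Icc r R ∩ v).Nonempty := ⟨R, hRmem, h⟩
      obtain ⟨x, hx, hxuv⟩ := isPreconnected_Icc u v hou hov hcover h1 h2
      exact hdisj x hx hxuv.1 hxuv.2
  obtain ⟨ρ, hρS, hRball⟩ := mem_iUnion₂.mp hRu
  rw [Metric.mem_ball, Real.dist_eq] at hRball
  have hRS : R ∈ S := transfer ρ hρS.1 R ⟨hrR, le_refl R⟩ hRball hρS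
  obtain ⟨-, h, hhc, hhl, hhw⟩ := hRS
  rw [hc] at hhw ⊢
  rw [← hhw]
  apply winding_unique hhc hc₂
  intro θ hθ
  rw [hhl θ hθ, hl₂ θ hθ]

section ext
-- exterior of a ball is preconnected in ℂ
lemma isPreconnected_exterior {M : ℝ} (hM : 0 ≤ M) :
    IsPreconnected {z : ℂ | M < ‖z‖} := by
  have hg : Continuous (fun p : ℝ × ℝ => ((M + Real.exp p.1 : ℝ) : ℂ) *
      Complex.exp ((p.2:ℂ) * I)) := by fun_prop
  have : {z : ℂ | M < ‖z‖} = range (fun p : ℝ × ℝ =>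
      ((M + Real.exp p.1 : ℝ) : ℂ) * Complex.exp ((p.2:ℂ) * I)) := by
    ext z
    simp only [mem_setOf_eq, mem_range]
    constructor
    · intro hz
      refine ⟨(Real.log (‖z‖ - M), Complex.arg z), ?_⟩
      simp only
      rw [Real.exp_log (by linarith)]
      have : (M + (‖z‖ - M) : ℝ) = ‖z‖ := by ring
      rw [this]
      exact Complex.norm_mul_exp_arg_mul_I z
    · rintro ⟨⟨t, θ⟩, rfl⟩
      simp only
      rw [norm_mul, Complex.norm_exp]
      have h1 : ((θ:ℂ) * I).re = 0 := by simp
      rw [h1, Real.exp_zero, mul_one, Complex.norm_real, Real.norm_eq_abs]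
      rw [_root_.abs_of_nonneg (by positivity : (0:ℝ) ≤ M + Real.exp t)]
      linarith [Real.exp_pos t]
  rw [this]
  exact isPreconnected_range hg
end ext

/-- An arc does not separate the plane. -/
lemma arc_compl_preconnected {f : ℝ → ℂ} {A : Set ℂ}
    (hfc : ContinuousOn f (Icc 0 1)) (hfi : InjOn f (Icc 0 1))
    (hfA : f '' Icc 0 1 = A) : IsPreconnected Aᶜ := by
  classical
  have hAK : IsCompact A := hfA ▸ isCompact_Icc.image_of_continuousOn hfc
  have hAcl : IsClosed A := hAK.isClosed
  -- bound
  obtain ⟨M₀, hM₀⟩ := hAK.isBounded.subset_closedBall 0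
  set M : ℝ := |M₀| + 1 with hMdef
  have hM0 : 0 ≤ M := by positivity
  have hAM : ∀ z ∈ A, ‖z‖ < M := by
    intro z hz
    have := hM₀ hz
    rw [Metric.mem_closedBall, Complex.dist_eq, sub_zero] at this
    calc ‖z‖ ≤ M₀ := this
    _ ≤ |M₀| := le_abs_self M₀
    _ < M := by rw [hMdef]; linarith
  by_contra hnc
  rw [IsPreconnected] at hnc
  push_neg at hnc
  obtain ⟨u, v, hou, hov, hcov, hune, hvne, hempty⟩ := hnc
  -- the exterior is contained in u or v
  set E : Set ℂ := {z : ℂ | M < ‖z‖} with hE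
  have hEA : E ⊆ Aᶜ := by
    intro z hz hzA
    exact absurd (hAM z hzA) (not_lt.mpr (le_of_lt hz))
  have hEpre := isPreconnected_exterior hM0
  have hEuv : E ⊆ u ∪ v := fun z hz => hcov (hEA hz)
  -- core argument, with the roles of u, v symmetric
  have core : ∀ u' v' : Set ℂ, IsOpen u' → IsOpen v' → Aᶜ ⊆ u' ∪ v' →
      Aᶜ ∩ (u' ∩ v') = ∅ → (Aᶜ ∩ v').Nonempty → E ⊆ u' → False := by
    intro u v hou hov hcov hempty hvne hEu
    set V : Set ℂ := v ∩ Aᶜ with hV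
    have hVo : IsOpen V := hov.inter hAcl.isOpen_compl
    obtain ⟨z₀, hz₀v, hz₀A⟩ : ∃ z, z ∈ v ∧ z ∈ Aᶜ := by
      obtain ⟨z, hz⟩ := hvne; exact ⟨z, hz.2, hz.1⟩
    have hz₀V : z₀ ∈ V := ⟨hz₀v, hz₀A⟩
    -- V is bounded
    have hVbdd : ∀ z ∈ V, ‖z‖ ≤ M := by
      intro z hz
      by_contra hlt
      push_neg at hlt
      have hzu : z ∈ u := hEu hlt
      have : z ∈ Aᶜ ∩ (u ∩ v) := ⟨hz.2, hzu, hz.1⟩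
      rw [hempty] at this
      exact this
    -- frontier of V is in A
    have hVfr : closure V \ V ⊆ A := by
      intro x hx
      by_contra hxA
      rcases hcov hxA with hxu | hxv
      · have hW : IsOpen (u ∩ Aᶜ) := hou.inter hAcl.isOpen_compl
        have hWx : x ∈ u ∩ Aᶜ := ⟨hxu, hxA⟩
        obtain ⟨y, hyW, hyV⟩ := mem_closure_iff.mp hx.1 _ hW hWx
        have : y ∈ Aᶜ ∩ (u ∩ v) := ⟨hyV.2, hyW.1, hyV.1⟩
        rw [hempty] at this
        exact this
      · exact hx.2 ⟨hxv, hxA⟩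
    have hclV : closure V ⊆ V ∪ A := by
      intro x hx
      by_cases hxV : x ∈ V
      · exact Or.inl hxV
      · exact Or.inr (hVfr ⟨hx, hxV⟩)
    -- lift the log of (z - z₀) along the arc
    have hne : ∀ t ∈ Icc (0:ℝ) 1, f t - z₀ ≠ 0 := by
      intro t ht h0
      apply hz₀A
      rw [← hfA]
      have : f t = z₀ := by linear_combination h0
      exact this ▸ mem_image_of_mem f ht
    obtain ⟨h, hhc, hhl⟩ := exists_log_lift zero_le_one (hfc.sub continuousOn_const) hne
    -- transfer the log to a function on A
    haveI : CompactSpace (Icc (0:ℝ) 1) := isCompact_iff_compactSpace.mp isCompact_Icc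
    have hbij : Function.Bijective (fun t : Icc (0:ℝ) 1 => (⟨f t, by
        rw [← hfA]; exact mem_image_of_mem f t.2⟩ : A)) := by
      constructor
      · intro s t hst
        have : f s = f t := congrArg Subtype.val hst
        exact Subtype.ext (hfi s.2 t.2 this)
      · rintro ⟨z, hz⟩
        rw [← hfA] at hz
        obtain ⟨t, ht, hft⟩ := hz
        exact ⟨⟨t, ht⟩, Subtype.ext hft⟩
    set e : Icc (0:ℝ) 1 ≃ A := Equiv.ofBijective _ hbij with he
    have hecont : Continuous (e : Icc (0:ℝ) 1 → A) := by
      apply Continuous.subtype_mk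
      exact continuousOn_iff_continuous_restrict.mp hfc
    set homeo := hecont.homeoOfEquivCompactToT2 with hhomeo
    set ψ : ℂ → ℂ := fun z => if hz : z ∈ A then h ((homeo.symm ⟨z, hz⟩ : Icc (0:ℝ) 1) : ℝ) else 0
      with hψ
    have hψc : ContinuousOn ψ A := by
      rw [continuousOn_iff_continuous_restrict]
      have : A.restrict ψ = fun z : A => h ((homeo.symm z : Icc (0:ℝ) 1) : ℝ) := by
        funext z
        exact dif_pos z.2
      rw [show A.domRestrict ψ = A.restrict ψ from rfl, this]
      have hrh : Continuous ((Icc (0:ℝ) 1).restrict h) := continuousOn_iff_continuous_restrict.mp hhc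
      exact hrh.comp homeo.symm.continuous
    have hψl : ∀ z ∈ A, Complex.exp (ψ z) = z - z₀ := by
      intro z hz
      rw [hψ]
      simp only [dif_pos hz]
      set t := homeo.symm ⟨z, hz⟩ with ht
      have h1 : Complex.exp (h t) = f t - z₀ := hhl t t.2
      have h2 : f (t : ℝ) = z := by
        have : (e t : ℂ) = z := by
          have := homeo.apply_symm_apply ⟨z, hz⟩
          exact congrArg Subtype.val this
        exact this
      rw [h1, h2]
    -- Tietze extension
    obtain ⟨G, hG⟩ := ContinuousMap.exists_restrict_eq (Y := ℂ) hAcl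
      ⟨A.restrict ψ, continuousOn_iff_continuous_restrict.mp hψc⟩
    have hGA : ∀ z ∈ A, G z = ψ z := by
      intro z hz
      have := congrFun (congrArg ContinuousMap.toFun hG) ⟨z, hz⟩
      exact this
    -- radii
    obtain ⟨ε, hε, hball⟩ := Metric.isOpen_iff.mp hVo z₀ hz₀V
    set r : ℝ := ε / 2 with hrdef
    have hr : 0 < r := by positivity
    have hrV : Metric.closedBall z₀ r ⊆ V := by
      intro z hz
      apply hball
      rw [Metric.mem_ball]
      rw [Metric.mem_closedBall] at hz
      calc dist z z₀ ≤ r := hz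
      _ < ε := by rw [hrdef]; linarith
    set R : ℝ := M + ‖z₀‖ + r + 1 with hRdef
    have habsz₀ : 0 ≤ ‖z₀‖ := norm_nonneg _
    have hrR : r ≤ R := by rw [hRdef]; linarith
    have hclVR : ∀ z ∈ closure V, ‖z - z₀‖ < R := by
      intro z hz
      have hzM : ‖z‖ ≤ M := by
        have hsub : V ⊆ Metric.closedBall 0 M := fun w hw => by
          rw [Metric.mem_closedBall, Complex.dist_eq, sub_zero]; exact hVbdd w hw
        have := (closure_minimal hsub Metric.isClosed_closedBall) hz
        rwa [Metric.mem_closedBall, Complex.dist_eq, sub_zero] at this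
      calc ‖z - z₀‖ ≤ ‖z‖ + ‖z₀‖ := by
            simpa using norm_sub_le z z₀
      _ < R := by rw [hRdef]; linarith
    -- the glued function Φ
    set Φ : ℂ → ℂ := fun z => if z ∈ closure V then Complex.exp (G z) / (z - z₀) else 1 with hΦ
    have hz₀A' : z₀ ∉ A := hz₀A
    have hΦcont : ContinuousOn Φ {z₀}ᶜ := by
      apply ContinuousOn.if
      · intro a ha
        obtain ⟨ha0, hafr⟩ := ha
        have haA : a ∈ A := by
          have h1 : a ∈ frontier (closure V) := by simpa using hafr
          have h2 : a ∈ frontier V := frontier_closure_subset h1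
          rw [hVo.frontier_eq] at h2
          exact hVfr h2
        have hexp : Complex.exp (G a) = a - z₀ := by
          rw [hGA a haA]; exact hψl a haA
        have hane : a - z₀ ≠ 0 := sub_ne_zero.mpr (fun h => hz₀A' (h ▸ haA))
        rw [hexp, div_self hane]
      · apply ContinuousOn.div
        · exact (Complex.continuous_exp.comp G.continuous).continuousOn
        · exact (continuous_id.sub continuous_const).continuousOn
        · intro z hz
          exact sub_ne_zero.mpr (by simpa using hz.1)
      · exact continuousOn_const
    have hΦne : ∀ z : ℂ, z ≠ z₀ → Φ z ≠ 0 := by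
      intro z hz
      rw [hΦ]
      by_cases h : z ∈ closure V
      · simp only [if_pos h]
        exact div_ne_zero (Complex.exp_ne_zero _) (sub_ne_zero.mpr hz)
      · simp only [if_neg h]
        exact one_ne_zero
    -- inner lift
    set h₁ : ℝ → ℂ := fun θ => G (myloop z₀ r θ) -
        (((Real.log r : ℝ) : ℂ) + ((2 * π * θ : ℝ) : ℂ) * I) with hh₁
    have hh₁c : ContinuousOn h₁ (Icc 0 1) := by
      apply Continuous.continuousOn
      apply Continuous.sub
      · exact G.continuous.comp (myloop_cont z₀ r)
      · fun_prop
    have hloopr : ∀ θ : ℝ, myloop z₀ r θ ∈ closure V := by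
      intro θ
      apply subset_closure
      apply hrV
      rw [Metric.mem_closedBall, myloop_dist z₀ r θ hr.le]
    have hloopexp : ∀ θ : ℝ, myloop z₀ r θ - z₀ =
        Complex.exp (((Real.log r : ℝ) : ℂ) + ((2 * π * θ : ℝ) : ℂ) * I) := by
      intro θ
      rw [Complex.exp_add, ← Complex.ofReal_exp, Real.exp_log hr]
      simp only [myloop]
      ring
    have hl₁ : ∀ θ ∈ Icc (0:ℝ) 1, Complex.exp (h₁ θ) = Φ (myloop z₀ r θ) := by
      intro θ hθ
      rw [hΦ]
      simp only [if_pos (hloopr θ)]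
      rw [hh₁]
      simp only
      rw [Complex.exp_sub, hloopexp θ]
    have hwind₁ : h₁ 1 - h₁ 0 = -(2 * (π:ℂ) * I) := by
      rw [hh₁]
      simp only [myloop_period]
      push_cast
      ring
    -- outer lift
    have hloopR : ∀ θ : ℝ, myloop z₀ R θ ∉ closure V := by
      intro θ hmem
      have h1 := hclVR _ hmem
      have h2 : dist (myloop z₀ R θ) z₀ = R := myloop_dist z₀ R θ (le_trans hr.le hrR)
      rw [Complex.dist_eq] at h2
      rw [h2] at h1
      exact lt_irrefl _ h1
    have hl₂ : ∀ θ ∈ Icc (0:ℝ) 1, Complex.exp ((fun _ : ℝ => (0:ℂ)) θ) = Φ (myloop z₀ R θ) := by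
      intro θ hθ
      rw [hΦ]
      simp only [if_neg (hloopR θ)]
      exact Complex.exp_zero
    -- apply the annulus lemma
    have hannsub : Metric.closedBall z₀ R \ Metric.ball z₀ r ⊆ {z₀}ᶜ := by
      intro z hz h0
      have : z ∉ Metric.ball z₀ r := hz.2
      apply this
      rw [Metric.mem_ball, h0, dist_self]
      exact hr
    have hfinal := winding_annulus hr hrR (hΦcont.mono hannsub)
      (fun z hz => hΦne z (by simpa using hannsub hz)) hh₁c continuousOn_const hl₁ hl₂
    rw [hwind₁] at hfinal
    simp only [sub_zero, sub_self] at hfinal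
    have : (2 * (π:ℂ) * I) = 0 := by linear_combination -hfinal
    have h2πI : (2 * (π:ℂ) * I) ≠ 0 := by
      simp [Real.pi_ne_zero, Complex.I_ne_zero]
    exact h2πI this
  -- endgame: E is contained in u or v
  have hEne : E.Nonempty := ⟨((M + 1 : ℝ) : ℂ), by
    simp only [hE, mem_setOf_eq, Complex.norm_real, Real.norm_eq_abs]
    rw [_root_.abs_of_nonneg (by linarith)]
    linarith⟩
  have hsplit : E ∩ u = ∅ ∨ E ∩ v = ∅ := by
    by_contra hcon
    push_neg at hcon
    obtain ⟨h1, h2⟩ := hcon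
    obtain ⟨z, hz, hzuv⟩ := hEpre u v hou hov hEuv h1 h2
    have : z ∈ Aᶜ ∩ (u ∩ v) := ⟨hEA hz, hzuv⟩
    rw [hempty] at this
    exact this
  rcases hsplit with h | h
  · -- E ⊆ v, apply core with roles swapped
    apply core v u hov hou (by rwa [union_comm]) (by rw [inter_comm v u]; exact hempty) hune
    intro z hz
    rcases hEuv hz with hzu | hzv
    · exfalso; have : z ∈ E ∩ u := ⟨hz, hzu⟩; rw [h] at this; exact this
    · exact hzv
  · -- E ⊆ u
    apply core u v hou hov hcov hempty hvne
    intro z hz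
    rcases hEuv hz with hzu | hzv
    · exact hzu
    · exfalso; have : z ∈ E ∩ v := ⟨hz, hzv⟩; rw [h] at this; exact this


lemma side_lemma {A : Set ℂ} (hAcl : IsClosed A) (hAsub : A ⊆ Metric.closedBall 0 1)
    (hpre : IsPreconnected Aᶜ) {u v : Set ℂ} (hou : IsOpen u) (hov : IsOpen v)
    (hcov : Metric.ball (0:ℂ) 1 \ A ⊆ u ∪ v)
    (hdisj : (Metric.ball (0:ℂ) 1 \ A) ∩ (u ∩ v) = ∅)
    (hne : ((Metric.ball (0:ℂ) 1 \ A) ∩ u).Nonempty) :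
    ∃ s ε, s ∈ Metric.sphere (0:ℂ) 1 ∧ s ∉ A ∧ 0 < ε ∧
      Metric.ball s ε ∩ A = ∅ ∧ Metric.ball (0:ℂ) 1 ∩ Metric.ball s ε ⊆ u := by
  set D : Set ℂ := Metric.ball (0:ℂ) 1 with hD
  set V : Set ℂ := u ∩ (D \ A) with hV
  have hVo : IsOpen V := hou.inter (Metric.isOpen_ball.inter hAcl.isOpen_compl)
  have hVne : V.Nonempty := by
    obtain ⟨z, hz1, hz2⟩ := hne
    exact ⟨z, hz2, hz1⟩
  have hVD : V ⊆ D := fun z hz => hz.2.1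
  have hVcb : V ⊆ Metric.closedBall (0:ℂ) 1 := fun z hz => Metric.ball_subset_closedBall (hVD hz)
  have hclVcb : closure V ⊆ Metric.closedBall (0:ℂ) 1 :=
    closure_minimal hVcb Metric.isClosed_closedBall
  -- find a circle point in the closure of V
  have hs : ∃ s, s ∈ closure V ∧ s ∈ Metric.sphere (0:ℂ) 1 ∧ s ∉ A := by
    by_contra hno
    push_neg at hno
    have hclo : closure V ⊆ V ∪ A := by
      intro x hx
      by_cases hxA : x ∈ A
      · exact Or.inr hxA
      left
      have hxcb := hclVcb hx
      rw [Metric.mem_closedBall] at hxcb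
      rcases lt_or_eq_of_le hxcb with hlt | heq
      · have hxD : x ∈ D := by rwa [hD, Metric.mem_ball]
        rcases hcov ⟨hxD, hxA⟩ with hxu | hxv
        · exact ⟨hxu, hxD, hxA⟩
        · exfalso
          set W : Set ℂ := v ∩ (D \ A) with hW
          have hWo : IsOpen W := hov.inter (Metric.isOpen_ball.inter hAcl.isOpen_compl)
          have hWx : x ∈ W := ⟨hxv, hxD, hxA⟩
          obtain ⟨y, hyW, hyV⟩ := mem_closure_iff.mp hx _ hWo hWx
          have : y ∈ (D \ A) ∩ (u ∩ v) := ⟨hyV.2, hyV.1, hyW.1⟩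
          rw [hdisj] at this
          exact this
      · exfalso
        have hxs : x ∈ Metric.sphere (0:ℂ) 1 := by rwa [Metric.mem_sphere]
        exact hxA (hno x hx hxs)
    have hVne' : (Aᶜ ∩ V).Nonempty := by
      obtain ⟨z, hz⟩ := hVne
      exact ⟨z, hz.2.2, hz⟩
    have hext : (Aᶜ ∩ (closure V)ᶜ).Nonempty := by
      refine ⟨(2:ℂ), ?_, ?_⟩
      · intro h2
        have := hAsub h2
        rw [Metric.mem_closedBall, Complex.dist_eq, sub_zero] at this
        norm_num at this
      · intro h2
        have := hclVcb h2
        rw [Metric.mem_closedBall, Complex.dist_eq, sub_zero] at this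
        norm_num at this
    have hcov' : Aᶜ ⊆ V ∪ (closure V)ᶜ := by
      intro x hx
      by_cases hxc : x ∈ closure V
      · rcases hclo hxc with h | h
        · exact Or.inl h
        · exact absurd h hx
      · exact Or.inr hxc
    obtain ⟨z, hz1, hz2, hz3⟩ := hpre V (closure V)ᶜ hVo isClosed_closure.isOpen_compl
      hcov' hVne' hext
    exact hz3 (subset_closure hz2)
  obtain ⟨s, hscl, hsC, hsA⟩ := hs
  obtain ⟨ε, hε, hball⟩ := Metric.isOpen_iff.mp hAcl.isOpen_compl s hsA
  refine ⟨s, ε, hsC, hsA, hε, ?_, ?_⟩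
  · rw [eq_empty_iff_forall_notMem]
    intro z hz
    exact hball hz.1 hz.2
  · set B : Set ℂ := D ∩ Metric.ball s ε with hB
    have hBpre : IsPreconnected B :=
      ((convex_ball (0:ℂ) 1).inter (convex_ball s ε)).isPreconnected
    have hBDA : B ⊆ D \ A := fun z hz => ⟨hz.1, hball hz.2⟩
    have hBu : (B ∩ u).Nonempty := by
      obtain ⟨y, hyb, hyV⟩ := mem_closure_iff.mp hscl _ Metric.isOpen_ball
        (Metric.mem_ball_self hε)
      exact ⟨y, ⟨hVD hyV, hyb⟩, hyV.1⟩
    have hBv : B ∩ v = ∅ := by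
      rw [eq_empty_iff_forall_notMem]
      intro z hz
      by_cases hBvne : (B ∩ v).Nonempty
      · obtain ⟨w, hw1, hw2, hw3⟩ := hBpre u v hou hov (fun y hy => hcov (hBDA hy)) hBu hBvne
        have : w ∈ (D \ A) ∩ (u ∩ v) := ⟨hBDA hw1, hw2, hw3⟩
        rw [hdisj] at this
        exact this
      · exact hBvne ⟨z, hz⟩
    intro z hz
    rcases hcov (hBDA hz) with h | h
    · exact h
    · exfalso
      have : z ∈ B ∩ v := ⟨hz, h⟩
      rw [hBv] at this
      exact this

lemma circle_param {a s : ℂ} (ha : ‖a‖ = 1) (hs : ‖s‖ = 1)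
    (hne : s ≠ a) : ∃ φ : ℝ, 0 < φ ∧ φ < 2*π ∧ a * Complex.exp ((φ:ℂ) * I) = s := by
  have ha0 : a ≠ 0 := by intro h; rw [h] at ha; simp at ha
  set w : ℂ := s / a with hw
  have hw1 : ‖w‖ = 1 := by rw [hw, norm_div, ha, hs]; norm_num
  have hwne : w ≠ 1 := by
    intro h
    rw [hw, div_eq_one_iff_eq ha0] at h
    exact hne h
  have harg : Complex.exp ((Complex.arg w : ℂ) * I) = w := by
    have := Complex.norm_mul_exp_arg_mul_I w
    rwa [hw1, Complex.ofReal_one, one_mul] at this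
  have hargne : Complex.arg w ≠ 0 := by
    intro h
    rw [h] at harg
    simp at harg
    exact hwne harg.symm
  have hfin : ∀ φ : ℝ, Complex.exp ((φ:ℂ) * I) = w → a * Complex.exp ((φ:ℂ) * I) = s := by
    intro φ hφ
    rw [hφ, hw, mul_div_cancel₀ _ ha0]
  rcases lt_or_ge 0 (Complex.arg w) with h | h
  · refine ⟨Complex.arg w, h, ?_, hfin _ harg⟩
    have := Complex.arg_le_pi w
    have := Real.pi_pos
    linarith
  · refine ⟨Complex.arg w + 2*π, ?_, ?_, ?_⟩
    · have := Complex.neg_pi_lt_arg w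
      have := Real.pi_pos
      linarith
    · have hlt : Complex.arg w < 0 := lt_of_le_of_ne h hargne
      linarith
    · apply hfin
      push_cast
      rw [add_mul, Complex.exp_add, harg]
      have : ((2:ℂ) * π) * I = 2 * (π:ℂ) * I := by ring
      rw [this, Complex.exp_two_pi_mul_I, mul_one]

theorem disk_minus_arc_connected (A : Set ℂ) (p q : ℂ)
    (hA : ArcFrom p q A)
    (hsub : A ⊆ closure (Metric.ball (0:ℂ) 1))
    (hsing : (A ∩ Metric.sphere (0:ℂ) 1).Subsingleton)
    (hend : A ∩ Metric.sphere (0:ℂ) 1 ⊆ {p, q}) :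
    IsConnected (Metric.ball (0:ℂ) 1 \ A) := by
  classical
  obtain ⟨f, hfc, hfi, hfA, hf0, hf1⟩ := hA
  have hAK : IsCompact A := hfA ▸ isCompact_Icc.image_of_continuousOn hfc
  have hAcl : IsClosed A := hAK.isClosed
  have hAsub : A ⊆ Metric.closedBall 0 1 := by
    rwa [closure_ball (0:ℂ) one_ne_zero] at hsub
  have hApne : A.Nonempty := ⟨p, by
    rw [← hfA, ← hf0]; exact mem_image_of_mem f (by norm_num)⟩
  have hpre := arc_compl_preconnected hfc hfi hfA
  have habs : ∀ z : ℂ, z ∈ Metric.sphere (0:ℂ) 1 ↔ ‖z‖ = 1 := by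
    intro z; rw [Metric.mem_sphere, Complex.dist_eq, sub_zero]
  have hCS : ∃ s : ℂ, ‖s‖ = 1 ∧ s ∉ A := by
    by_contra hbad
    push_neg at hbad
    have h1 : (1:ℂ) ∈ A ∩ Metric.sphere 0 1 :=
      ⟨hbad 1 (by norm_num), (habs 1).mpr (by norm_num)⟩
    have h2 : (-1:ℂ) ∈ A ∩ Metric.sphere 0 1 :=
      ⟨hbad (-1) (by norm_num), (habs _).mpr (by norm_num)⟩
    have := hsing h1 h2
    norm_num at this
  constructor
  · -- Nonempty
    obtain ⟨s, hs1, hs2⟩ := hCS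
    obtain ⟨ε, hε, hball⟩ := Metric.isOpen_iff.mp hAcl.isOpen_compl s hs2
    set t := min ε 1 / 2 with ht
    have ht0 : 0 < t := by positivity
    have htε : t < ε := by
      rw [ht]
      have h1 : min ε 1 ≤ ε := min_le_left _ _
      linarith
    have ht1 : t ≤ 1/2 := by
      rw [ht]
      have h1 : min ε 1 ≤ 1 := min_le_right _ _
      linarith
    refine ⟨((1 - t : ℝ):ℂ) * s, ?_, ?_⟩
    · rw [Metric.mem_ball, Complex.dist_eq, sub_zero, norm_mul, hs1, mul_one,
        Complex.norm_real, Real.norm_eq_abs, _root_.abs_of_nonneg (by linarith : (0:ℝ) ≤ 1 - t)]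
      linarith
    · intro hmem
      refine hball ?_ hmem
      rw [Metric.mem_ball, Complex.dist_eq]
      have he : ((1 - t:ℝ):ℂ) * s - s = (-(t:ℝ):ℂ) * s := by push_cast; ring
      rw [he, norm_mul, hs1, mul_one, norm_neg, Complex.norm_real, Real.norm_eq_abs,
        _root_.abs_of_nonneg ht0.le]
      exact htε
  · -- IsPreconnected
    rw [IsPreconnected]
    by_contra hnc
    push_neg at hnc
    obtain ⟨u, v, hou, hov, hcov, hune, hvne, hempty⟩ := hnc
    obtain ⟨s₁, ε₁, hs₁C, hs₁A, hε₁, hball₁, hsub₁⟩ :=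
      side_lemma hAcl hAsub hpre hou hov hcov hempty hune
    obtain ⟨s₂, ε₂, hs₂C, hs₂A, hε₂, hball₂, hsub₂⟩ :=
      side_lemma hAcl hAsub hpre hov hou (by rwa [union_comm])
        (by rw [inter_comm v u]; exact hempty) hvne
    have hsC1 : ‖s₁‖ = 1 := (habs _).mp hs₁C
    have hsC2 : ‖s₂‖ = 1 := (habs _).mp hs₂C
    -- choose a point a on the circle containing A ∩ sphere, distinct from s₁, s₂
    obtain ⟨a, haC, haA, has₁, has₂⟩ : ∃ a : ℂ, ‖a‖ = 1 ∧
        (A ∩ Metric.sphere (0:ℂ) 1 ⊆ {a}) ∧ a ≠ s₁ ∧ a ≠ s₂ := by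
      rcases (A ∩ Metric.sphere (0:ℂ) 1).eq_empty_or_nonempty with hemp | ⟨b, hbA, hbC⟩
      · have hpick : ∃ a : ℂ, ‖a‖ = 1 ∧ a ≠ s₁ ∧ a ≠ s₂ := by
          have hI1 : (I:ℂ) ≠ 1 := by
            intro h; rw [Complex.ext_iff] at h; norm_num at h
          have hIm1 : (I:ℂ) ≠ -1 := by
            intro h; rw [Complex.ext_iff] at h; norm_num at h
          by_cases h1 : (1:ℂ) ≠ s₁ ∧ (1:ℂ) ≠ s₂
          · exact ⟨1, by norm_num, h1.1, h1.2⟩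
          by_cases h2 : (-1:ℂ) ≠ s₁ ∧ (-1:ℂ) ≠ s₂
          · exact ⟨-1, by norm_num, h2.1, h2.2⟩
          have hIgood : I ≠ s₁ ∧ I ≠ s₂ := by
            rcases not_and_or.mp h1 with h | h <;> rcases not_and_or.mp h2 with h' | h' <;>
              rw [not_ne_iff] at h h'
            · exfalso; rw [← h] at h'; norm_num at h'
            · exact ⟨by rw [← h]; exact hI1, by rw [← h']; exact hIm1⟩
            · exact ⟨by rw [← h']; exact hIm1, by rw [← h]; exact hI1⟩
            · exfalso; rw [← h] at h'; norm_num at h'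
          exact ⟨I, Complex.norm_I, hIgood.1, hIgood.2⟩
        obtain ⟨a, h1, h2, h3⟩ := hpick
        exact ⟨a, h1, by rw [hemp]; exact empty_subset _, h2, h3⟩
      · refine ⟨b, (habs b).mp hbC, ?_, ?_, ?_⟩
        · intro x hx
          rw [mem_singleton_iff]
          exact hsing hx ⟨hbA, hbC⟩
        · intro h; exact hs₁A (h ▸ hbA)
        · intro h; exact hs₂A (h ▸ hbA)
    have ha0 : a ≠ 0 := by intro h; rw [h] at haC; simp at haC
    obtain ⟨φ₁, hφ₁0, hφ₁2, hφ₁⟩ := circle_param haC hsC1 (Ne.symm has₁)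
    obtain ⟨φ₂, hφ₂0, hφ₂2, hφ₂⟩ := circle_param haC hsC2 (Ne.symm has₂)
    set g : ℝ → ℂ := fun τ => a * Complex.exp (((φ₁ + τ * (φ₂ - φ₁) : ℝ) : ℂ) * I) with hg
    have hgc : Continuous g := by rw [hg]; fun_prop
    have hgabs : ∀ τ : ℝ, ‖g τ‖ = 1 := by
      intro τ
      rw [hg]
      simp only
      rw [norm_mul, haC, one_mul, Complex.norm_exp]
      have : (((φ₁ + τ * (φ₂ - φ₁) : ℝ) : ℂ) * I).re = 0 := by simp
      rw [this, Real.exp_zero]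
    have hg0 : g 0 = s₁ := by
      rw [hg]
      simp only
      have : (φ₁ + 0 * (φ₂ - φ₁) : ℝ) = φ₁ := by ring
      rw [this]
      exact hφ₁
    have hg1 : g 1 = s₂ := by
      rw [hg]
      simp only
      have : (φ₁ + 1 * (φ₂ - φ₁) : ℝ) = φ₂ := by ring
      rw [this]
      exact hφ₂
    have hπ := Real.pi_pos
    have hgA : ∀ τ ∈ Icc (0:ℝ) 1, g τ ∉ A := by
      intro τ hτ hmem
      have hgC : g τ ∈ Metric.sphere (0:ℂ) 1 := (habs _).mpr (hgabs τ)
      have hga : g τ = a := haA ⟨hmem, hgC⟩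
      set θ : ℝ := φ₁ + τ * (φ₂ - φ₁) with hθ
      have hexp1 : Complex.exp ((θ:ℂ) * I) = 1 := by
        apply mul_left_cancel₀ ha0
        rw [mul_one]
        exact hga
      obtain ⟨n, hn⟩ := Complex.exp_eq_one_iff.mp hexp1
      have hn' : (θ:ℂ) = (n:ℂ) * (2*(π:ℂ)) := by
        apply mul_right_cancel₀ Complex.I_ne_zero
        rw [hn]; ring
      have hθr : θ = n * (2*π) := by exact_mod_cast hn'
      have hθbounds : 0 < θ ∧ θ < 2*π := by
        rcases le_total φ₁ φ₂ with hle | hle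
        · constructor <;> nlinarith [hτ.1, hτ.2]
        · constructor <;> nlinarith [hτ.1, hτ.2]
      have hn0 : (0:ℝ) < (n:ℝ) := by nlinarith [hθbounds.1, hθr]
      have hn1 : (n:ℝ) < 1 := by nlinarith [hθbounds.2, hθr]
      have h0n : (0:ℤ) < n := by exact_mod_cast hn0
      have h1n : n < 1 := by exact_mod_cast hn1
      omega
    -- δ : distance from the circular arc to A
    set Γ : Set ℂ := g '' Icc 0 1 with hΓ
    have hΓK : IsCompact Γ := isCompact_Icc.image hgc
    have hΓne : Γ.Nonempty := ⟨g 0, mem_image_of_mem g (by norm_num)⟩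
    obtain ⟨z₁, hz₁Γ, hz₁min⟩ := hΓK.exists_isMinOn hΓne
      ((Metric.continuous_infDist_pt A).continuousOn)
    set δ := Metric.infDist z₁ A with hδdef
    have hδ : 0 < δ := by
      rw [hδdef, ← hAcl.notMem_iff_infDist_pos hApne]
      obtain ⟨τ, hτ, hτz⟩ := hz₁Γ
      exact hτz ▸ hgA τ hτ
    have hδle : ∀ τ ∈ Icc (0:ℝ) 1, δ ≤ Metric.infDist (g τ) A := fun τ hτ =>
      hz₁min (mem_image_of_mem g hτ)
    set t := min (min ε₁ ε₂) (min δ 1) / 2 with htdef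
    have ht0 : 0 < t := by positivity
    have htε₁ : t < ε₁ := by
      have h1 : min (min ε₁ ε₂) (min δ 1) ≤ ε₁ := le_trans (min_le_left _ _) (min_le_left _ _)
      rw [htdef]; linarith
    have htε₂ : t < ε₂ := by
      have h1 : min (min ε₁ ε₂) (min δ 1) ≤ ε₂ := le_trans (min_le_left _ _) (min_le_right _ _)
      rw [htdef]; linarith
    have htδ : t < δ := by
      have h1 : min (min ε₁ ε₂) (min δ 1) ≤ δ := le_trans (min_le_right _ _) (min_le_left _ _)
      rw [htdef]; linarith
    have ht1 : t ≤ 1/2 := by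
      have h1 : min (min ε₁ ε₂) (min δ 1) ≤ 1 := le_trans (min_le_right _ _) (min_le_right _ _)
      rw [htdef]; linarith
    have habs' : ∀ τ : ℝ, ‖((1-t:ℝ):ℂ) * g τ‖ = 1 - t := by
      intro τ
      rw [norm_mul, hgabs τ, mul_one, Complex.norm_real, Real.norm_eq_abs,
        _root_.abs_of_nonneg (by linarith : (0:ℝ) ≤ 1 - t)]
    have hC'D : ∀ τ ∈ Icc (0:ℝ) 1, ((1-t:ℝ):ℂ) * g τ ∈ Metric.ball (0:ℂ) 1 \ A := by
      intro τ hτ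
      constructor
      · rw [Metric.mem_ball, Complex.dist_eq, sub_zero, habs']
        linarith
      · intro hmem
        have hd : dist (g τ) (((1-t:ℝ):ℂ) * g τ) = t := by
          rw [Complex.dist_eq]
          have he : g τ - ((1-t:ℝ):ℂ) * g τ = ((t:ℝ):ℂ) * g τ := by push_cast; ring
          rw [he, norm_mul, hgabs τ, mul_one, Complex.norm_real, Real.norm_eq_abs, _root_.abs_of_nonneg ht0.le]
        have h1 : Metric.infDist (g τ) A ≤ t := hd ▸ Metric.infDist_le_dist_of_mem hmem
        have h2 := hδle τ hτ
        linarith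
    have hdist_end : ∀ s : ℂ, ‖s‖ = 1 → dist (((1-t:ℝ):ℂ) * s) s = t := by
      intro s hs
      rw [Complex.dist_eq]
      have he : ((1-t:ℝ):ℂ) * s - s = (-(t:ℝ):ℂ) * s := by push_cast; ring
      rw [he, norm_mul, hs, mul_one, norm_neg, Complex.norm_real, Real.norm_eq_abs,
        _root_.abs_of_nonneg ht0.le]
    have hend1 : ((1-t:ℝ):ℂ) * g 0 ∈ u := by
      apply hsub₁
      refine ⟨(hC'D 0 (by norm_num)).1, ?_⟩
      rw [Metric.mem_ball, hg0]
      rw [hdist_end s₁ hsC1]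
      exact htε₁
    have hend2 : ((1-t:ℝ):ℂ) * g 1 ∈ v := by
      apply hsub₂
      refine ⟨(hC'D 1 (by norm_num)).1, ?_⟩
      rw [Metric.mem_ball, hg1]
      rw [hdist_end s₂ hsC2]
      exact htε₂
    set C' : Set ℂ := (fun τ => ((1-t:ℝ):ℂ) * g τ) '' Icc 0 1 with hC'
    have hC'pre : IsPreconnected C' :=
      isPreconnected_Icc.image _ (continuous_const.mul hgc).continuousOn
    have h1 : (C' ∩ u).Nonempty :=
      ⟨_, mem_image_of_mem _ (by norm_num : (0:ℝ) ∈ Icc (0:ℝ) 1), hend1⟩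
    have h2 : (C' ∩ v).Nonempty :=
      ⟨_, mem_image_of_mem _ (by norm_num : (1:ℝ) ∈ Icc (0:ℝ) 1), hend2⟩
    have hC'sub : C' ⊆ u ∪ v := by
      rintro z ⟨τ, hτ, rfl⟩
      exact hcov (hC'D τ hτ)
    obtain ⟨z, hz1, hz2, hz3⟩ := hC'pre u v hou hov hC'sub h1 h2
    obtain ⟨τ, hτ, rfl⟩ := hz1
    have hbad : ((1-t:ℝ):ℂ) * g τ ∈ (Metric.ball (0:ℂ) 1 \ A) ∩ (u ∩ v) :=
      ⟨hC'D τ hτ, hz2, hz3⟩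
    rw [hempty] at hbad
    exact hbad
end
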